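/- arXiv:1002.0182 — 8 statements merged into one kernel-verified Lean document; each statement's English description precedes it below -/
import Mathlib

section
/- Let D be the m×m lower bidiagonal matrix with 1's on the diagonal and -1's on the subdiagonal. Then the singular values of D are σ_j(D) = 2 cos(π j / (2m+1)) for j = 1, …, m (in descending order). -/
open Matrix Real

/-- The m×m first-order difference matrix: 1's on the diagonal, -1's on the subdiagonal. -/
noncomputable def Dmat (m : ℕ) : Matrix (Fin m) (Fin m) ℝ :=
  Matrix.of fun i j => if (i : ℕ) = (j : ℕ) then 1 else if (i : ℕ) = (j : ℕ) + 1 then -1 else 0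

lemma sum_ite_eq_val {m : ℕ} (f : Fin m → ℝ) (c : ℕ) :
    ∑ j : Fin m, (if (j : ℕ) = c then f j else 0) =
      if h : c < m then f ⟨c, h⟩ else 0 := by
  split_ifs with h
  · rw [Finset.sum_eq_single ⟨c, h⟩]
    · simp
    · intro b _ hb
      have : (b : ℕ) ≠ c := fun hbc => hb (Fin.ext hbc)
      simp [this]
    · simp
  · apply Finset.sum_eq_zero
    intro j _
    have := j.isLt
    have : (j : ℕ) ≠ c := by omega
    simp [this]

lemma sum_ite_succ_val {m : ℕ} (f : Fin m → ℝ) (c : ℕ) :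
    ∑ j : Fin m, (if (j : ℕ) + 1 = c then f j else 0) =
      if h : c - 1 < m ∧ 1 ≤ c then f ⟨c - 1, h.1⟩ else 0 := by
  have heq : ∀ j : Fin m, ((j : ℕ) + 1 = c) = ((j : ℕ) = c - 1 ∧ 1 ≤ c) := by
    intro j; apply propext; omega
  simp_rw [heq]
  by_cases hc : 1 ≤ c
  · simp only [hc, and_true]
    rw [sum_ite_eq_val f (c-1)]
  · have h2 : ∀ j : Fin m, ¬((j:ℕ) = c - 1 ∧ 1 ≤ c) := fun j h => hc h.2
    simp only [h2, if_false, Finset.sum_const_zero]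
    simp [hc]

lemma mem_spectrum_of_eigvec {m : ℕ} {M : Matrix (Fin m) (Fin m) ℝ} {v : Fin m → ℝ} {μ : ℝ}
    (hv : v ≠ 0) (h : M *ᵥ v = μ • v) : μ ∈ spectrum ℝ M := by
  rw [← AlgEquiv.spectrum_eq (Matrix.toLinAlgEquiv' (R := ℝ) (n := Fin m)) M]
  refine (Module.End.hasEigenvalue_of_hasEigenvector (x := v) ⟨?_, hv⟩).mem_spectrum
  rw [Module.End.mem_eigenspace_iff]
  show Matrix.toLin' M v = μ • v
  rw [Matrix.toLin'_apply, h]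

lemma eigen_mem (m : ℕ) (k : ℕ) (hk1 : 1 ≤ k) (hk2 : k ≤ m) :
    (4 * Real.cos (Real.pi * k / (2 * m + 1)) ^ 2 : ℝ) ∈
      spectrum ℝ ((Dmat m)ᴴ * Dmat m) := by
  have hm : 0 < m := lt_of_lt_of_le hk1 hk2
  have hden : (2 * (m:ℝ) + 1) ≠ 0 := by positivity
  have hk1' : (1:ℝ) ≤ (k:ℝ) := by exact_mod_cast hk1
  have hk2' : (k:ℝ) ≤ (m:ℝ) := by exact_mod_cast hk2
  set α : ℝ := Real.pi * k / (2 * m + 1) with hα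
  set θ : ℝ := Real.pi - 2 * α with hθ
  -- bounds on α and θ
  have hα0 : 0 < α := by
    apply div_pos (mul_pos Real.pi_pos (by linarith)) (by positivity)
  have hα2 : α < Real.pi / 2 := by
    rw [hα, div_lt_div_iff₀ (by positivity) (by norm_num : (0:ℝ) < 2)]
    have h2k : (k:ℝ) * 2 < 2 * m + 1 := by linarith
    nlinarith [Real.pi_pos]
  have hθ0 : 0 < θ := by rw [hθ]; linarith
  have hθπ : θ < Real.pi := by rw [hθ]; linarith
  -- the eigenvector
  set s : ℕ → ℝ := fun n => Real.sin (n * θ) with hs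
  have hs0 : s 0 = 0 := by simp [hs]
  -- three-term recurrence
  have T1 : ∀ n : ℕ, s n + s (n + 2) = 2 * Real.cos θ * s (n + 1) := by
    intro n
    have h1 : ((n:ℝ) + 2) * θ = ((n:ℝ)+1) * θ + θ := by ring
    have h2 : (n:ℝ) * θ = ((n:ℝ)+1) * θ - θ := by ring
    simp only [hs]
    push_cast
    rw [h1, h2, Real.sin_add, Real.sin_sub]
    ring
  -- boundary identity
  have T2 : s (m + 1) = s m := by
    have hNθ : (2 * (m:ℝ) + 1) * θ = (2 * ((m:ℝ) - k) + 1) * Real.pi := by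
      rw [hθ, hα]; field_simp; ring
    have hmk : ((m - k : ℕ) : ℝ) = (m:ℝ) - (k:ℝ) := by
      push_cast [Nat.cast_sub hk2]; ring
    have key : ((m:ℝ) + 1) * θ = (Real.pi - (m:ℝ) * θ) + ((m - k : ℕ) : ℝ) * (2 * Real.pi) := by
      rw [hmk]; nlinarith [hNθ]
    simp only [hs]
    push_cast
    rw [key, Real.sin_add_nat_mul_two_pi, Real.sin_pi_sub]
  set v : Fin m → ℝ := fun i => s ((i:ℕ) + 1) with hv
  have hvne : v ≠ 0 := by
    intro hcontra
    have h0 : v ⟨0, hm⟩ = 0 := by rw [hcontra]; rfl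
    have : Real.sin θ > 0 := Real.sin_pos_of_pos_of_lt_pi hθ0 hθπ
    rw [hv] at h0
    simp only [hs] at h0
    norm_num at h0
    linarith
  -- compute D *ᵥ v
  have hDv : Dmat m *ᵥ v = fun i : Fin m => s ((i:ℕ) + 1) - s (i:ℕ) := by
    funext i
    show ∑ j, Dmat m i j * v j = _
    have hsummand : ∀ j : Fin m, Dmat m i j * v j =
        (if (j:ℕ) = (i:ℕ) then v j else 0) + (if (j:ℕ) + 1 = (i:ℕ) then -(v j) else 0) := by
      intro j
      simp only [Dmat, Matrix.of_apply]
      split_ifs with h1 h2 h3 h4 h5 h6 <;> (try ring) <;> (exfalso; omega)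
    simp_rw [hsummand]
    rw [Finset.sum_add_distrib, sum_ite_eq_val, sum_ite_succ_val]
    have hi : (i:ℕ) < m := i.isLt
    rw [dif_pos hi]
    by_cases h1 : 1 ≤ (i:ℕ)
    · rw [dif_pos ⟨by omega, h1⟩]
      simp only [hv]
      have : (i:ℕ) - 1 + 1 = (i:ℕ) := by omega
      rw [this]
      ring
    · rw [dif_neg (by omega)]
      have : (i:ℕ) = 0 := by omega
      simp only [hv, this, hs0]
      ring
  -- compute Dᴴ *ᵥ w
  have hMv : ((Dmat m)ᴴ * Dmat m) *ᵥ v = (2 - 2 * Real.cos θ) • v := by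
    rw [← Matrix.mulVec_mulVec, hDv]
    funext i
    show ∑ j, (Dmat m)ᴴ i j * (s ((j:ℕ)+1) - s (j:ℕ)) = _
    have hsummand : ∀ j : Fin m, (Dmat m)ᴴ i j * (s ((j:ℕ)+1) - s (j:ℕ)) =
        (if (j:ℕ) = (i:ℕ) then s ((j:ℕ)+1) - s (j:ℕ) else 0) +
        (if (j:ℕ) = (i:ℕ) + 1 then -(s ((j:ℕ)+1) - s (j:ℕ)) else 0) := by
      intro j
      simp only [Dmat, Matrix.conjTranspose_apply, Matrix.of_apply, star_trivial]
      split_ifs with h1 h2 h3 h4 h5 h6 <;> (try ring) <;> (exfalso; omega)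
    simp_rw [hsummand]
    rw [Finset.sum_add_distrib, sum_ite_eq_val, sum_ite_eq_val]
    have hi : (i:ℕ) < m := i.isLt
    rw [dif_pos hi]
    simp only [Pi.smul_apply, smul_eq_mul, hv]
    have e2 : (i:ℕ) + 1 + 1 = (i:ℕ) + 2 := by omega
    by_cases h1 : (i:ℕ) + 1 < m
    · rw [dif_pos h1]
      simp only [e2]
      nlinarith [T1 (i:ℕ)]
    · rw [dif_neg h1]
      have him : (i:ℕ) + 1 = m := by omega
      have e1 : (i:ℕ) + 2 = m + 1 := by omega
      have hsm : s ((i:ℕ) + 2) = s ((i:ℕ) + 1) := by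
        rw [e1, T2]; exact congrArg s him.symm
      nlinarith [T1 (i:ℕ), hsm]
  have hval : (2 - 2 * Real.cos θ) = 4 * Real.cos α ^ 2 := by
    rw [hθ, Real.cos_pi_sub, Real.cos_two_mul]
    ring
  rw [← hval]
  exact mem_spectrum_of_eigvec hvne hMv
/-- `σ` is the sequence of singular values of `A` listed in descending order:
it is antitone and is a rearrangement of the square roots of the eigenvalues of `Aᴴ * A`. -/
noncomputable def IsDescSV {m k : ℕ} (A : Matrix (Fin m) (Fin k) ℝ) (σ : Fin k → ℝ) : Prop :=
  Antitone σ ∧ ∃ e : Equiv.Perm (Fin k),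
    ∀ i, σ (e i) = Real.sqrt ((Matrix.isHermitian_conjTranspose_mul_self A).eigenvalues i)

lemma strictAnti_eq_of_image_eq {n : ℕ} {f g : Fin n → ℝ}
    (hf : StrictAnti f) (hg : StrictAnti g)
    (h : Finset.image f Finset.univ = Finset.image g Finset.univ) : f = g := by
  have hF : StrictMono (f ∘ Fin.rev) := fun i j hij => hf (Fin.rev_lt_rev.2 hij)
  have hG : StrictMono (g ∘ Fin.rev) := fun i j hij => hg (Fin.rev_lt_rev.2 hij)
  have hrev : Finset.image (Fin.rev : Fin n → Fin n) Finset.univ = Finset.univ :=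
    Finset.image_univ_equiv (Fin.revPerm)
  have himgF : Finset.image (f ∘ Fin.rev) Finset.univ = Finset.image f Finset.univ := by
    rw [← Finset.image_image, hrev]
  have himgG : Finset.image (g ∘ Fin.rev) Finset.univ = Finset.image g Finset.univ := by
    rw [← Finset.image_image, hrev]
  have hcard : (Finset.image f Finset.univ).card = n := by
    rw [Finset.card_image_of_injective _ hf.injective]; simp
  have h1 : f ∘ Fin.rev = (Finset.image f Finset.univ).orderEmbOfFin hcard := by
    apply Finset.orderEmbOfFin_unique hcard _ hF
    intro x
    rw [← himgF]
    exact Finset.mem_image_of_mem _ (Finset.mem_univ x)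
  have h2 : g ∘ Fin.rev = (Finset.image f Finset.univ).orderEmbOfFin hcard := by
    apply Finset.orderEmbOfFin_unique hcard _ hG
    intro x
    rw [h, ← himgG]
    exact Finset.mem_image_of_mem _ (Finset.mem_univ x)
  funext i
  have := congrFun (h1.trans h2.symm) (Fin.rev i)
  simpa [Fin.rev_rev] using this

/-- The singular values of the difference matrix `D` are
`σ_j(D) = 2 cos(π j / (2m+1))`, `j = 1, …, m`, in descending order. -/
theorem singular_values_of_difference_matrix (m : ℕ) (hm : 0 < m)
    (σ : Fin m → ℝ) (hσ : IsDescSV (Dmat m) σ) :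
    ∀ j : Fin m, σ j = 2 * Real.cos (Real.pi * ((j : ℕ) + 1) / (2 * m + 1)) := by
  obtain ⟨hanti, e, he⟩ := hσ
  set ev := (Matrix.isHermitian_conjTranspose_mul_self (Dmat m)).eigenvalues with hev
  set A : Fin m → ℝ := fun j => Real.pi * ((j:ℕ) + 1) / (2 * m + 1) with hA
  set g : Fin m → ℝ := fun j => 4 * Real.cos (A j) ^ 2 with hg
  set h : Fin m → ℝ := fun j => 2 * Real.cos (A j) with hh
  have hden : (0:ℝ) < 2 * m + 1 := by positivity
  have hApos : ∀ j : Fin m, 0 < A j := by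
    intro j
    apply div_pos (mul_pos Real.pi_pos (by positivity)) hden
  have hAlt : ∀ j : Fin m, A j < Real.pi / 2 := by
    intro j
    rw [hA]
    rw [div_lt_div_iff₀ hden (by norm_num : (0:ℝ) < 2)]
    have hj : ((j:ℕ):ℝ) + 1 ≤ (m:ℝ) := by
      have := j.isLt; exact_mod_cast this
    nlinarith [Real.pi_pos]
  have hcos : ∀ j : Fin m, 0 < Real.cos (A j) := fun j =>
    Real.cos_pos_of_mem_Ioo ⟨by linarith [hApos j, Real.pi_pos], hAlt j⟩
  have hAmono : StrictMono A := by
    intro i j hij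
    rw [hA]
    apply div_lt_div_of_pos_right ?_ hden
    have : ((i:ℕ):ℝ) < ((j:ℕ):ℝ) := by exact_mod_cast hij
    nlinarith [Real.pi_pos]
  have hhanti : StrictAnti h := by
    intro i j hij
    have : Real.cos (A j) < Real.cos (A i) :=
      Real.cos_lt_cos_of_nonneg_of_le_pi (hApos i).le
        (by linarith [hAlt j, Real.pi_pos]) (hAmono hij)
    simp only [hh]
    linarith
  have hganti : StrictAnti g := by
    intro i j hij
    have h1 := hhanti hij
    simp only [hh] at h1
    have h2 := hcos i
    have h3 := hcos j
    simp only [hg]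
    nlinarith
  -- each g j is an eigenvalue
  have hmem : ∀ j : Fin m, ∃ i : Fin m, ev i = g j := by
    intro j
    have hk := eigen_mem m ((j:ℕ) + 1) (by omega) (by have := j.isLt; omega)
    rw [Matrix.IsHermitian.spectrum_real_eq_range_eigenvalues (Matrix.isHermitian_conjTranspose_mul_self (Dmat m))] at hk
    obtain ⟨i, hi⟩ := hk
    refine ⟨i, ?_⟩
    rw [hev]
    rw [hi]
    simp only [hg, hA]
    push_cast
    ring_nf
  -- images coincide
  classical
  have himg : Finset.image ev Finset.univ = Finset.image g Finset.univ := by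
    symm
    apply Finset.eq_of_subset_of_card_le
    · intro x hx
      obtain ⟨j, _, rfl⟩ := Finset.mem_image.1 hx
      obtain ⟨i, hi⟩ := hmem j
      exact Finset.mem_image.2 ⟨i, Finset.mem_univ i, hi⟩
    · calc (Finset.image ev Finset.univ).card ≤ (Finset.univ : Finset (Fin m)).card :=
            Finset.card_image_le
        _ = (Finset.image g Finset.univ).card := by
            rw [Finset.card_image_of_injective _ hganti.injective]
  have hsqrtg : ∀ j : Fin m, Real.sqrt (g j) = h j := by
    intro j
    have : g j = (h j) ^ 2 := by simp only [hg, hh]; ring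
    rw [this, Real.sqrt_sq (by simp only [hh]; linarith [hcos j])]
  -- image of σ = image of h
  have himgσ : Finset.image σ Finset.univ = Finset.image h Finset.univ := by
    have h1 : Finset.image σ Finset.univ = Finset.image (fun i => σ (e i)) Finset.univ := by
      rw [show (fun i => σ (e i)) = σ ∘ ⇑e from rfl, ← Finset.image_image,
        Finset.image_univ_equiv]
    have h2 : (fun i => σ (e i)) = fun i => Real.sqrt (ev i) := funext he
    have h3 : Finset.image (fun i => Real.sqrt (ev i)) Finset.univ =
        Finset.image Real.sqrt (Finset.image ev Finset.univ) := by
      rw [Finset.image_image]; rfl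
    have h4 : Finset.image Real.sqrt (Finset.image g Finset.univ) =
        Finset.image (fun j => Real.sqrt (g j)) Finset.univ := by
      rw [Finset.image_image]; rfl
    rw [h1, h2, h3, himg, h4]
    congr 1
    exact funext hsqrtg
  -- σ is injective
  have hσinj : Function.Injective σ := by
    rw [← Set.injOn_univ, ← Finset.coe_univ]
    rw [← Finset.card_image_iff]
    rw [himgσ, Finset.card_image_of_injective _ hhanti.injective]
  have hσanti : StrictAnti σ := hanti.strictAnti_of_injective hσinj
  have : σ = h := strictAnti_eq_of_image_eq hσanti hhanti himgσ
  intro j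
  rw [this]
end

section
/- Let D be the m×m difference matrix. Then D is invertible, and the singular values of D^{-1} satisfy σ_j(D^{-1}) = 1 / (2 sin(π(j - 1/2)/(2m+1))) for j = 1, …, m (in descending order). -/
open Matrix Real

/-! ### Auxiliary definitions -/

noncomputable def alph (m : ℕ) (j : Fin m) : ℝ :=
  (2 * (j : ℕ) + 1 : ℝ) * Real.pi / (2 * (2 * m + 1))

noncomputable def Vmat (m : ℕ) : Matrix (Fin m) (Fin m) ℝ :=
  Matrix.of fun i j => Real.cos ((2 * (i : ℕ) + 1 : ℝ) * alph m j)

noncomputable def muv (m : ℕ) (j : Fin m) : ℝ := 2 - 2 * Real.cos (2 * alph m j)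

/-! ### Trigonometric identities -/

lemma trig3 (t x : ℝ) :
    Real.cos ((t - 2) * x) + Real.cos ((t + 2) * x) = 2 * Real.cos (2 * x) * Real.cos (t * x) := by
  rw [sub_mul, add_mul, Real.cos_sub, Real.cos_add]
  ring

lemma trig2 (t x : ℝ) :
    Real.cos (t * x) * (2 * Real.sin x) = Real.sin ((t + 1) * x) - Real.sin ((t - 1) * x) := by
  rw [add_mul, sub_mul, Real.sin_add, Real.sin_sub]
  ring

lemma trig4 (a c : ℝ) :
    Real.cos a * Real.cos c = (Real.cos (a + c) + Real.cos (a - c)) / 2 := by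
  rw [Real.cos_add, Real.cos_sub]; ring

lemma sumcos (m : ℕ) (b : ℝ) :
    (∑ i ∈ Finset.range m, Real.cos ((2 * i + 1 : ℝ) * b)) * (2 * Real.sin b)
      = Real.sin (2 * m * b) := by
  rw [Finset.sum_mul]
  have : ∀ i ∈ Finset.range m,
      Real.cos ((2 * i + 1 : ℝ) * b) * (2 * Real.sin b)
        = Real.sin (2 * (i + 1 : ℕ) * b) - Real.sin (2 * i * b) := by
    intro i _
    rw [trig2 (2 * i + 1 : ℝ) b]
    push_cast
    ring_nf
  rw [Finset.sum_congr rfl this, Finset.sum_range_sub (fun i : ℕ => Real.sin (2 * i * b))]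
  norm_num

lemma Ssum (m s : ℕ) (h1 : 0 < s) (h2 : s < 2 * m + 1) :
    ∑ i ∈ Finset.range m, Real.cos ((2 * i + 1 : ℝ) * (s * Real.pi / (2 * m + 1)))
      = -((-1 : ℝ) ^ s) / 2 := by
  set b : ℝ := s * Real.pi / (2 * m + 1) with hb
  have hden : (0 : ℝ) < 2 * m + 1 := by positivity
  have hbpos : 0 < b := by
    apply div_pos (by positivity) hden
  have hblt : b < Real.pi := by
    rw [hb, div_lt_iff₀ hden]
    have : (s : ℝ) < 2 * m + 1 := by exact_mod_cast h2
    nlinarith [Real.pi_pos]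
  have hsb : Real.sin b > 0 := Real.sin_pos_of_pos_of_lt_pi hbpos hblt
  have key : 2 * (m : ℝ) * b = s * Real.pi - b := by
    rw [hb]; field_simp; ring
  have := sumcos m b
  rw [key] at this
  have h2' : Real.sin ((s : ℝ) * Real.pi - b) = -((-1 : ℝ) ^ s * Real.sin b) :=
    Real.sin_nat_mul_pi_sub b s
  rw [h2'] at this
  have hne : Real.sin b ≠ 0 := ne_of_gt hsb
  field_simp at this ⊢
  have e : ∀ x : ℕ, Real.cos ((2 * (x : ℝ) + 1) * b) = Real.cos (b * (2 * (x : ℝ) + 1)) :=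
    fun x => by rw [mul_comm]
  simp only [e] at this
  nlinarith [this, hsb]

/-! ### Orthogonality of the eigenvector matrix -/

lemma Sminus (m : ℕ) (j k : Fin m) (h : (k : ℕ) < (j : ℕ)) :
    ∑ i ∈ Finset.range m, Real.cos ((2 * i + 1 : ℝ) * (alph m j - alph m k))
      = -((-1 : ℝ) ^ ((j : ℕ) - (k : ℕ))) / 2 := by
  have hd : alph m j - alph m k = (((j : ℕ) - (k : ℕ) : ℕ) : ℝ) * Real.pi / (2 * m + 1) := by
    unfold alph
    rw [Nat.cast_sub h.le]
    field_simp
    ring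
  rw [hd]
  exact Ssum m _ (by omega) (by have := j.2; omega)

lemma entry_eq (m : ℕ) (j k : Fin m) :
    ((Vmat m)ᵀ * Vmat m) j k =
      ((∑ i ∈ Finset.range m, Real.cos ((2 * i + 1 : ℝ) * (alph m j + alph m k)))
       + ∑ i ∈ Finset.range m, Real.cos ((2 * i + 1 : ℝ) * (alph m j - alph m k))) / 2 := by
  have h0 : ((Vmat m)ᵀ * Vmat m) j k
      = ∑ i ∈ Finset.range m,
          (Real.cos ((2 * i + 1 : ℝ) * alph m j) * Real.cos ((2 * i + 1 : ℝ) * alph m k)) := by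
    rw [Matrix.mul_apply, ← Fin.sum_univ_eq_sum_range
      (fun i : ℕ => Real.cos ((2 * i + 1 : ℝ) * alph m j) * Real.cos ((2 * i + 1 : ℝ) * alph m k)) m]
    apply Finset.sum_congr rfl
    intro i _
    simp [Vmat, Matrix.transpose_apply]
  rw [h0, ← Finset.sum_add_distrib, Finset.sum_div]
  apply Finset.sum_congr rfl
  intro i _
  rw [trig4]
  ring_nf

lemma VtV (m : ℕ) : (Vmat m)ᵀ * Vmat m = ((2 * m + 1 : ℝ) / 4) • (1 : Matrix (Fin m) (Fin m) ℝ) := by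
  ext j k
  rw [entry_eq]
  have hplus : alph m j + alph m k = ((j : ℕ) + (k : ℕ) + 1 : ℕ) * Real.pi / (2 * m + 1) := by
    unfold alph; push_cast; field_simp; ring
  by_cases hjk : j = k
  · subst hjk
    have h1 : ∑ i ∈ Finset.range m, Real.cos ((2 * i + 1 : ℝ) * (alph m j - alph m j)) = m := by
      simp
    have h2 : ∑ i ∈ Finset.range m, Real.cos ((2 * i + 1 : ℝ) * (alph m j + alph m j))
        = -((-1 : ℝ) ^ (2 * (j : ℕ) + 1)) / 2 := by
      rw [hplus]
      have : (j : ℕ) + (j : ℕ) + 1 = 2 * (j : ℕ) + 1 := by omega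
      rw [this]
      exact Ssum m _ (by omega) (by have := j.2; omega)
    rw [h1, h2]
    have : (-1 : ℝ) ^ (2 * (j : ℕ) + 1) = -1 := by
      rw [pow_succ, pow_mul]; norm_num
    rw [this]
    simp [Matrix.one_apply, Matrix.smul_apply]
    ring
  · -- off-diagonal
    have hne : (j : ℕ) ≠ (k : ℕ) := fun h => hjk (Fin.ext h)
    have hS1 : ∑ i ∈ Finset.range m, Real.cos ((2 * i + 1 : ℝ) * (alph m j + alph m k))
        = -((-1 : ℝ) ^ ((j : ℕ) + (k : ℕ) + 1)) / 2 := by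
      rw [hplus]
      exact Ssum m _ (by omega) (by have := j.2; have := k.2; omega)
    have hS2 : ∑ i ∈ Finset.range m, Real.cos ((2 * i + 1 : ℝ) * (alph m j - alph m k))
        = -((-1 : ℝ) ^ ((j : ℕ) + (k : ℕ))) / 2 := by
      rcases lt_or_gt_of_ne hne with h | h
      · have : ∀ i ∈ Finset.range m,
            Real.cos ((2 * i + 1 : ℝ) * (alph m j - alph m k))
              = Real.cos ((2 * i + 1 : ℝ) * (alph m k - alph m j)) := by
          intro i _
          rw [show alph m j - alph m k = -(alph m k - alph m j) by ring, mul_neg, Real.cos_neg]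
        rw [Finset.sum_congr rfl this, Sminus m k j h]
        congr 1
        have h2 : (k : ℕ) - (j : ℕ) + 2 * (j : ℕ) = (j : ℕ) + (k : ℕ) := by omega
        rw [← h2, pow_add, pow_mul]
        norm_num
      · rw [Sminus m j k h]
        congr 1
        have h2 : (j : ℕ) - (k : ℕ) + 2 * (k : ℕ) = (j : ℕ) + (k : ℕ) := by omega
        rw [← h2, pow_add, pow_mul]
        norm_num
    rw [hS1, hS2, pow_succ]
    simp [Matrix.one_apply, hjk, Matrix.smul_apply]
    ring

/-! ### Row sums against the difference matrix -/

lemma sumD (m : ℕ) (v : ℕ → ℝ) (i : Fin m) :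
    ∑ j : Fin m, Dmat m i j * v j = v i - (if (i : ℕ) = 0 then 0 else v ((i : ℕ) - 1)) := by
  have hsplit : ∀ j : Fin m, Dmat m i j * v j =
      (if i = j then v j else 0) - (if (i : ℕ) = (j : ℕ) + 1 then v j else 0) := by
    intro j
    simp only [Dmat, Matrix.of_apply]
    rcases eq_or_ne (i : ℕ) (j : ℕ) with h | h
    · have : i = j := Fin.ext h
      simp only [h, if_true, this]
      rw [if_neg (by omega), one_mul, sub_zero]
    · have : i ≠ j := fun hh => h (by rw [hh])
      simp [h, this]
      split <;> ring
  rw [Finset.sum_congr rfl (fun j _ => hsplit j), Finset.sum_sub_distrib]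
  congr 1
  · simp
  · rcases eq_or_ne (i : ℕ) 0 with h | h
    · rw [h, if_pos rfl]
      apply Finset.sum_eq_zero
      intro j _
      rw [if_neg (by omega)]
    · have him : (i : ℕ) - 1 < m := by have := i.2; omega
      rw [if_neg h, Finset.sum_eq_single (⟨(i : ℕ) - 1, him⟩ : Fin m)]
      · rw [if_pos (by simp only [Fin.val_mk]; omega)]
      · intro j _ hj
        rw [if_neg]
        intro hc
        apply hj
        apply Fin.ext
        simp
        omega
      · intro h; exact absurd (Finset.mem_univ _) h

lemma sumDT (m : ℕ) (v : ℕ → ℝ) (k : Fin m) :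
    ∑ j : Fin m, Dmat m j k * v j = v k - (if (k : ℕ) + 1 = m then 0 else v ((k : ℕ) + 1)) := by
  have hsplit : ∀ j : Fin m, Dmat m j k * v j =
      (if j = k then v j else 0) - (if (j : ℕ) = (k : ℕ) + 1 then v j else 0) := by
    intro j
    simp only [Dmat, Matrix.of_apply]
    rcases eq_or_ne (j : ℕ) (k : ℕ) with h | h
    · have : j = k := Fin.ext h
      simp only [h, if_true, this]
      rw [if_neg (by omega), one_mul, sub_zero]
    · have : j ≠ k := fun hh => h (by rw [hh])
      simp [h, this]
      split <;> ring
  rw [Finset.sum_congr rfl (fun j _ => hsplit j), Finset.sum_sub_distrib]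
  congr 1
  · simp
  · rcases eq_or_ne ((k : ℕ) + 1) m with h | h
    · rw [if_pos h]
      apply Finset.sum_eq_zero
      intro j _
      rw [if_neg]
      have := j.2
      omega
    · have hkm : (k : ℕ) + 1 < m := by have := k.2; omega
      rw [if_neg h, Finset.sum_eq_single (⟨(k : ℕ) + 1, hkm⟩ : Fin m)]
      · rw [if_pos (by simp)]
      · intro j _ hj
        rw [if_neg]
        intro hc
        exact hj (Fin.ext (by simpa using hc))
      · intro h; exact absurd (Finset.mem_univ _) h

/-! ### The eigen-equation -/

lemma cos_top (m : ℕ) (j : Fin m) : Real.cos ((2 * (m : ℝ) + 1) * alph m j) = 0 := by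
  have h : (2 * (m : ℝ) + 1) * alph m j = (j : ℕ) * Real.pi + Real.pi / 2 := by
    unfold alph
    have hd : (2 * (m : ℝ) + 1) ≠ 0 := by positivity
    field_simp
  rw [h, Real.cos_add, Real.cos_pi_div_two, Real.sin_pi_div_two]
  simp [Real.sin_nat_mul_pi]

lemma NV (m : ℕ) : (Dmat m * (Dmat m)ᵀ) * Vmat m = Vmat m * Matrix.diagonal (muv m) := by
  ext i j
  set c : ℝ := Real.cos (2 * alph m j) with hc
  set u : ℕ → ℝ := fun a => Real.cos ((2 * (a : ℝ) + 1) * alph m j) with hu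
  set w : ℕ → ℝ := fun a => u a - (if a + 1 = m then 0 else u (a + 1)) with hw
  have htop : u m = 0 := by
    rw [hu]
    exact cos_top m j
  have hrec0 : u 1 + u 0 = 2 * c * u 0 := by
    rw [hu, hc]
    simp only [Nat.cast_one, Nat.cast_zero]
    have h1 : (2 * (1 : ℝ) + 1) = 1 + 2 := by norm_num
    have h0 : (2 * (0 : ℝ) + 1) = 1 := by norm_num
    rw [h1, h0]
    have := trig3 1 (alph m j)
    rw [show ((1 : ℝ) - 2) = -1 by norm_num] at this
    rw [show ((-1 : ℝ)) * alph m j = -(1 * alph m j) by ring, Real.cos_neg] at this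
    linarith [this]
  have hrec : ∀ a : ℕ, 1 ≤ a → u (a - 1) + u (a + 1) = 2 * c * u a := by
    intro a ha
    rw [hu, hc]
    simp only []
    have hc1 : ((a - 1 : ℕ) : ℝ) = (a : ℝ) - 1 := by
      rw [Nat.cast_sub ha]; norm_num
    have hc2 : ((a + 1 : ℕ) : ℝ) = (a : ℝ) + 1 := by push_cast; ring
    rw [hc1, hc2]
    have := trig3 (2 * (a : ℝ) + 1) (alph m j)
    rw [show (2 * (a : ℝ) + 1 - 2) = 2 * ((a : ℝ) - 1) + 1 by ring,
        show (2 * (a : ℝ) + 1 + 2) = 2 * ((a : ℝ) + 1) + 1 by ring] at this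
    linarith [this]
  have step1 : ∀ a : Fin m, ((Dmat m)ᵀ * Vmat m) a j = w a := by
    intro a
    rw [Matrix.mul_apply]
    have : ∀ b : Fin m, (Dmat m)ᵀ a b * Vmat m b j = Dmat m b a * u b := by
      intro b
      rfl
    rw [Finset.sum_congr rfl (fun b _ => this b), sumDT m u a]
  have hlhs : ((Dmat m * (Dmat m)ᵀ) * Vmat m) i j
      = w i - (if (i : ℕ) = 0 then 0 else w ((i : ℕ) - 1)) := by
    rw [Matrix.mul_assoc, Matrix.mul_apply]
    rw [Finset.sum_congr rfl (fun a (_ : a ∈ Finset.univ) => by rw [step1 a]), sumD m w i]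
  have hrhs : (Vmat m * Matrix.diagonal (muv m)) i j = u i * (2 - 2 * c) := by
    rw [Matrix.mul_diagonal]
    rfl
  rw [hlhs, hrhs]
  rcases eq_or_ne (i : ℕ) 0 with h0 | h0
  · rw [if_pos h0, h0, sub_zero, hw]
    simp only []
    rcases eq_or_ne (0 + 1) m with h1 | h1
    · rw [if_pos h1]
      have hu1 : u 1 = 0 := by rw [show 1 = m from h1]; exact htop
      rw [sub_zero]
      linear_combination -hrec0 + hu1
    · rw [if_neg h1]
      linear_combination -hrec0
  · rw [if_neg h0]
    have hi : 1 ≤ (i : ℕ) := by omega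
    have him : (i : ℕ) < m := i.2
    have hreci := hrec (i : ℕ) hi
    rw [hw]
    simp only []
    have hne : (i : ℕ) - 1 + 1 ≠ m := by omega
    rw [if_neg hne, show (i : ℕ) - 1 + 1 = (i : ℕ) from by omega]
    rcases eq_or_ne ((i : ℕ) + 1) m with h1 | h1
    · rw [if_pos h1]
      have hui1 : u ((i : ℕ) + 1) = 0 := by rw [h1]; exact htop
      linear_combination -hrec ((i : ℕ)) hi + hui1
    · rw [if_neg h1]
      linear_combination -hrec ((i : ℕ)) hi

/-! ### Characteristic polynomial tools -/

open Polynomial in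
lemma charpoly_conj {n : Type*} [DecidableEq n] [Fintype n] (P A : Matrix n n ℝ)
    (hP : IsUnit P.det) : (P * A * P⁻¹).charpoly = A.charpoly := by
  have hPP : P * P⁻¹ = 1 := Matrix.mul_nonsing_inv P hP
  have key : charmatrix (P * A * P⁻¹)
      = (C : ℝ →+* ℝ[X]).mapMatrix P * charmatrix A * (C : ℝ →+* ℝ[X]).mapMatrix P⁻¹ := by
    unfold charmatrix
    rw [mul_sub, sub_mul, ← _root_.map_mul, ← _root_.map_mul]
    congr 1
    have hcomm : Matrix.scalar n (X : ℝ[X]) * (C : ℝ →+* ℝ[X]).mapMatrix P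
        = (C : ℝ →+* ℝ[X]).mapMatrix P * Matrix.scalar n (X : ℝ[X]) :=
      (Matrix.scalar_commute (X : ℝ[X]) (fun r' => Commute.all _ _) _).eq
    rw [← hcomm, Matrix.mul_assoc, ← _root_.map_mul, hPP]
    simp
  rw [Matrix.charpoly, key, Matrix.det_mul, Matrix.det_mul, Matrix.charpoly]
  have : ((C : ℝ →+* ℝ[X]).mapMatrix P).det * ((C : ℝ →+* ℝ[X]).mapMatrix P⁻¹).det = 1 := by
    rw [mul_comm, ← Matrix.det_mul, ← _root_.map_mul, Matrix.nonsing_inv_mul P hP]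
    simp
  calc ((C : ℝ →+* ℝ[X]).mapMatrix P).det * (charmatrix A).det
        * ((C : ℝ →+* ℝ[X]).mapMatrix P⁻¹).det
      = (charmatrix A).det * (((C : ℝ →+* ℝ[X]).mapMatrix P).det
        * ((C : ℝ →+* ℝ[X]).mapMatrix P⁻¹).det) := by ring
    _ = (charmatrix A).det := by rw [this, mul_one]

open Polynomial in
lemma charpoly_diag {m : ℕ} (d : Fin m → ℝ) :
    (Matrix.diagonal d).charpoly = ∏ i, (X - C (d i)) := by
  rw [Matrix.charpoly_of_upperTriangular _ (Matrix.blockTriangular_diagonal d)]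
  simp

/-! ### Sorted-sequence uniqueness -/

lemma multiset_ofFn {m : ℕ} (f : Fin m → ℝ) :
    (↑(List.ofFn f) : Multiset ℝ) = Multiset.map f Finset.univ.val := by
  rw [List.ofFn_eq_map]
  rfl

lemma antitone_unique {m : ℕ} (f g : Fin m → ℝ) (hf : Antitone f) (hg : Antitone g)
    (h : Multiset.map f Finset.univ.val = Multiset.map g Finset.univ.val) : f = g := by
  apply List.ofFn_injective
  have hperm : List.Perm (List.ofFn f) (List.ofFn g) := by
    rw [← Multiset.coe_eq_coe, multiset_ofFn, multiset_ofFn]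
    exact h
  have hsf : (List.ofFn f).Pairwise (· ≥ ·) := by
    rw [List.pairwise_ofFn]
    intro a b hab
    exact hf hab.le
  have hsg : (List.ofFn g).Pairwise (· ≥ ·) := by
    rw [List.pairwise_ofFn]
    intro a b hab
    exact hg hab.le
  exact List.Perm.eq_of_pairwise' hsf hsg hperm

lemma perm_map_univ {m : ℕ} (e : Equiv.Perm (Fin m)) (f : Fin m → ℝ) :
    Multiset.map (fun i => f (e i)) Finset.univ.val = Multiset.map f Finset.univ.val := by
  have h1 : Multiset.map (fun i => f (e i)) Finset.univ.val
      = Multiset.map f (Multiset.map (⇑e) Finset.univ.val) := by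
    rw [Multiset.map_map]; rfl
  rw [h1]
  congr 1
  have h2 := Finset.map_univ_equiv e
  calc Multiset.map (⇑e) Finset.univ.val = (Finset.univ.map e.toEmbedding).val := rfl
    _ = Finset.univ.val := by rw [h2]

/-! ### Determinants and invertibility -/

lemma detD (m : ℕ) : (Dmat m).det = 1 := by
  have hbt : (Dmat m).BlockTriangular OrderDual.toDual := by
    intro i j hij
    have hlt : (i : ℕ) < (j : ℕ) := hij
    simp only [Dmat, Matrix.of_apply]
    rw [if_neg (by omega), if_neg (by omega)]
  rw [Matrix.det_of_lowerTriangular (Dmat m) hbt]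
  apply Finset.prod_eq_one
  intro i _
  simp [Dmat]

lemma isUnit_detD (m : ℕ) : IsUnit (Dmat m).det := by
  rw [detD]; exact isUnit_one

lemma isUnit_detV (m : ℕ) : IsUnit (Vmat m).det := by
  have h := congrArg Matrix.det (VtV m)
  rw [Matrix.det_mul, Matrix.det_transpose, Matrix.det_smul, Matrix.det_one, mul_one] at h
  have hpos : (0 : ℝ) < ((2 * m + 1 : ℝ) / 4) ^ Fintype.card (Fin m) := by positivity
  rw [isUnit_iff_ne_zero]
  intro h0
  rw [h0, mul_zero] at h
  exact absurd h.symm (ne_of_gt hpos)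

lemma alph_pos (m : ℕ) (j : Fin m) : 0 < alph m j := by
  unfold alph
  have := Real.pi_pos
  positivity

lemma alph_lt (m : ℕ) (j : Fin m) : alph m j < Real.pi / 2 := by
  unfold alph
  rw [div_lt_div_iff₀ (by positivity) (by norm_num)]
  have hj : (j : ℕ) < m := j.2
  have : (2 * (j : ℕ) + 1 : ℝ) < 2 * m + 1 := by
    have : ((j : ℕ) : ℝ) < m := by exact_mod_cast hj
    linarith
  nlinarith [Real.pi_pos]

lemma sin_alph_pos (m : ℕ) (j : Fin m) : 0 < Real.sin (alph m j) :=
  Real.sin_pos_of_pos_of_lt_pi (alph_pos m j)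
    (lt_trans (alph_lt m j) (by linarith [Real.pi_pos]))

lemma muv_eq_sq (m : ℕ) (j : Fin m) : muv m j = (2 * Real.sin (alph m j)) ^ 2 := by
  unfold muv
  rw [Real.cos_two_mul]
  nlinarith [Real.sin_sq_add_cos_sq (alph m j)]

lemma muv_pos (m : ℕ) (j : Fin m) : 0 < muv m j := by
  rw [muv_eq_sq]
  have := sin_alph_pos m j
  positivity

lemma sqrt_muv_inv (m : ℕ) (j : Fin m) :
    Real.sqrt ((muv m j)⁻¹) = 1 / (2 * Real.sin (alph m j)) := by
  rw [muv_eq_sq, Real.sqrt_inv, Real.sqrt_sq (by linarith [sin_alph_pos m j] : (0:ℝ) ≤ 2 * Real.sin (alph m j)),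
    one_div]

/-! ### The eigenvalue multiset -/

open Polynomial in
lemma prod_roots {m : ℕ} (f : Fin m → ℝ) :
    (∏ j, (X - C (f j))).roots = Multiset.map f Finset.univ.val := by
  have h : ∏ j, (X - C (f j))
      = ((Multiset.map f Finset.univ.val).map (fun a => X - C a)).prod := by
    rw [Multiset.map_map]
    rfl
  rw [h, Polynomial.roots_multiset_prod_X_sub_C]

open Polynomial in
lemma eig_multiset (m : ℕ) :
    Multiset.map ((Matrix.isHermitian_conjTranspose_mul_self (Dmat m)⁻¹).eigenvalues)
        Finset.univ.val
      = Multiset.map (fun j => (muv m j)⁻¹) Finset.univ.val := by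
  set D := Dmat m
  set V := Vmat m
  set N := D * Dᵀ with hN
  have hVdet := isUnit_detV m
  have hNdecomp : N = V * Matrix.diagonal (muv m) * V⁻¹ := by
    rw [← NV, Matrix.mul_assoc, Matrix.mul_nonsing_inv _ hVdet, mul_one]
  have hmu_ne : ∀ j, muv m j ≠ 0 := fun j => ne_of_gt (muv_pos m j)
  have hMN : (D⁻¹)ᴴ * D⁻¹ = N⁻¹ := by
    rw [hN, Matrix.mul_inv_rev, Matrix.conjTranspose_eq_transpose_of_trivial,
      Matrix.transpose_nonsing_inv]
  have hNinv : N⁻¹ = V * Matrix.diagonal (fun j => (muv m j)⁻¹) * V⁻¹ := by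
    apply Matrix.inv_eq_right_inv
    rw [hNdecomp]
    calc V * Matrix.diagonal (muv m) * V⁻¹ * (V * Matrix.diagonal (fun j => (muv m j)⁻¹) * V⁻¹)
        = V * Matrix.diagonal (muv m) * (V⁻¹ * V) * Matrix.diagonal (fun j => (muv m j)⁻¹) * V⁻¹
          := by simp only [Matrix.mul_assoc]
      _ = V * (Matrix.diagonal (muv m) * Matrix.diagonal (fun j => (muv m j)⁻¹)) * V⁻¹ := by
          rw [Matrix.nonsing_inv_mul _ hVdet, Matrix.mul_one]
          simp only [Matrix.mul_assoc]
      _ = 1 := by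
          rw [Matrix.diagonal_mul_diagonal]
          have : (fun j => muv m j * (muv m j)⁻¹) = fun _ : Fin m => (1 : ℝ) := by
            funext j
            exact mul_inv_cancel₀ (hmu_ne j)
          rw [this, Matrix.diagonal_one, Matrix.mul_one, Matrix.mul_nonsing_inv _ hVdet]
  have hcp1 : ((D⁻¹)ᴴ * D⁻¹).charpoly = ∏ j, (X - C ((muv m j)⁻¹)) := by
    rw [hMN, hNinv, charpoly_conj _ _ hVdet, charpoly_diag]
  set hH := Matrix.isHermitian_conjTranspose_mul_self D⁻¹ with hhH
  set U := hH.eigenvectorUnitary with hU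
  have hU2 : (U : Matrix (Fin m) (Fin m) ℝ) * star (U : Matrix (Fin m) (Fin m) ℝ) = 1 :=
    (Matrix.mem_unitaryGroup_iff).mp U.2
  have hUdet : IsUnit (U : Matrix (Fin m) (Fin m) ℝ).det :=
    Matrix.isUnit_det_of_right_inverse hU2
  have hUinv : (U : Matrix (Fin m) (Fin m) ℝ)⁻¹ = star (U : Matrix (Fin m) (Fin m) ℝ) :=
    Matrix.inv_eq_right_inv hU2
  have hof : (RCLike.ofReal ∘ hH.eigenvalues : Fin m → ℝ) = hH.eigenvalues := by
    funext i
    simp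
  have hcp2 : ((D⁻¹)ᴴ * D⁻¹).charpoly = ∏ i, (X - C (hH.eigenvalues i)) := by
    conv_lhs => rw [hH.spectral_theorem]
    rw [Unitary.conjStarAlgAut_apply, ← hU, hof, ← hUinv, charpoly_conj _ _ hUdet, charpoly_diag]
  have := congrArg Polynomial.roots (hcp2.symm.trans hcp1)
  rwa [prod_roots, prod_roots] at this

/-! ### The target sequence -/

noncomputable def gseq (m : ℕ) (j : Fin m) : ℝ := 1 / (2 * Real.sin (alph m j))

lemma gseq_antitone (m : ℕ) : Antitone (gseq m) := by
  intro j k hjk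
  unfold gseq
  have hmono : alph m j ≤ alph m k := by
    unfold alph
    have : ((j : ℕ) : ℝ) ≤ ((k : ℕ) : ℝ) := by exact_mod_cast hjk
    have hpi := Real.pi_pos
    apply div_le_div_of_nonneg_right ?_ (by positivity)
    · nlinarith
  have hsin : Real.sin (alph m j) ≤ Real.sin (alph m k) := by
    apply Real.strictMonoOn_sin.monotoneOn
    · constructor
      · linarith [alph_pos m j, Real.pi_pos]
      · exact (alph_lt m j).le
    · constructor
      · linarith [alph_pos m k, Real.pi_pos]
      · exact (alph_lt m k).le
    · exact hmono
  have h1 := sin_alph_pos m j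
  have h2 := sin_alph_pos m k
  apply one_div_le_one_div_of_le (by linarith)
  linarith

/-- The difference matrix `D` is invertible and the singular values of `D⁻¹` are
`σ_j(D⁻¹) = 1 / (2 sin(π (j - 1/2) / (2m+1)))`, `j = 1, …, m`, in descending order. -/
theorem singular_values_of_inverse_difference_matrix (m : ℕ) (hm : 0 < m) :
    IsUnit (Dmat m) ∧
    ∀ σ : Fin m → ℝ, IsDescSV (Dmat m)⁻¹ σ →
      ∀ j : Fin m,
        σ j = 1 / (2 * Real.sin (Real.pi * ((j : ℕ) + 1 - 1/2) / (2 * m + 1))) := by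
  constructor
  · exact (Matrix.isUnit_iff_isUnit_det _).2 (isUnit_detD m)
  · intro σ hσ j
    obtain ⟨hanti, e, he⟩ := hσ
    set hH := Matrix.isHermitian_conjTranspose_mul_self (Dmat m)⁻¹ with hhH
    have hmult : Multiset.map σ Finset.univ.val = Multiset.map (gseq m) Finset.univ.val := by
      calc Multiset.map σ Finset.univ.val
          = Multiset.map (fun i => σ (e i)) Finset.univ.val := (perm_map_univ e σ).symm
        _ = Multiset.map (fun i => Real.sqrt (hH.eigenvalues i)) Finset.univ.val := by
            apply Multiset.map_congr rfl
            intro i _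
            exact he i
        _ = Multiset.map Real.sqrt (Multiset.map hH.eigenvalues Finset.univ.val) := by
            rw [Multiset.map_map]
            rfl
        _ = Multiset.map Real.sqrt (Multiset.map (fun j => (muv m j)⁻¹) Finset.univ.val) := by
            rw [eig_multiset m]
        _ = Multiset.map (fun j => Real.sqrt ((muv m j)⁻¹)) Finset.univ.val := by
            rw [Multiset.map_map]
            rfl
        _ = Multiset.map (gseq m) Finset.univ.val := by
            apply Multiset.map_congr rfl
            intro i _
            rw [sqrt_muv_inv]
            rfl
    have hσg : σ = gseq m := antitone_unique σ (gseq m) hanti (gseq_antitone m) hmult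
    rw [hσg]
    unfold gseq
    congr 2
    unfold alph
    have h1 : (2 * (m : ℝ) + 1) ≠ 0 := by positivity
    field_simp
    ring
end

section
/- Let D be the m×m difference matrix and r a positive integer with m ≥ 2r. Define C^{(r)} = (D*)^r D^r − (D* D)^r. Then C^{(r)}_{ij} = 0 whenever (i,j) lies outside the union of the two corner blocks {1,…,r}×{1,…,r} and {m−r+1,…,m}×{m−r+1,…,m}. In particular, rank(C^{(r)}) ≤ 2r. -/
open Matrix Real

/-- Band support predicate: nonzero entries have `a ≤ j - i ≤ b`. -/
def SuppZ {m : ℕ} (a b : ℤ) (M : Matrix (Fin m) (Fin m) ℝ) : Prop :=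
  ∀ i j : Fin m, M i j ≠ 0 → a ≤ (j : ℤ) - (i : ℤ) ∧ (j : ℤ) - (i : ℤ) ≤ b

lemma suppZ_mul {m : ℕ} {a b c d : ℤ} {M N : Matrix (Fin m) (Fin m) ℝ}
    (hM : SuppZ a b M) (hN : SuppZ c d N) : SuppZ (a + c) (b + d) (M * N) := by
  intro i j h
  rw [Matrix.mul_apply] at h
  obtain ⟨l, -, hl⟩ := Finset.exists_ne_zero_of_sum_ne_zero h
  have h1 := hM i l (left_ne_zero_of_mul hl)
  have h2 := hN l j (right_ne_zero_of_mul hl)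
  omega

lemma suppZ_D (m : ℕ) : SuppZ (-1) 0 (Dmat m) := by
  intro i j h
  simp only [Dmat, Matrix.of_apply] at h
  split_ifs at h with h1 h2
  · omega
  · omega
  · exact absurd rfl h

lemma suppZ_DT (m : ℕ) : SuppZ 0 1 (Dmat m)ᵀ := by
  intro i j h
  rw [Matrix.transpose_apply] at h
  have := suppZ_D m j i h
  omega

lemma suppZ_pow {m : ℕ} {a b : ℤ} {M : Matrix (Fin m) (Fin m) ℝ}
    (hM : SuppZ a b M) (k : ℕ) : SuppZ (k * a) (k * b) (M ^ k) := by
  induction k with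
  | zero =>
    intro i j h
    rw [pow_zero, Matrix.one_apply] at h
    have : i = j := by by_contra hc; rw [if_neg hc] at h; exact h rfl
    subst this; simp
  | succ k ih =>
    rw [pow_succ]
    intro i j h
    rw [Matrix.mul_apply] at h
    obtain ⟨l, -, hl⟩ := Finset.exists_ne_zero_of_sum_ne_zero h
    have h1 := ih i l (left_ne_zero_of_mul hl)
    have h2 := hM l j (right_ne_zero_of_mul hl)
    have e1 : ((k + 1 : ℕ) : ℤ) * a = (k : ℤ) * a + a := by push_cast; ring
    have e2 : ((k + 1 : ℕ) : ℤ) * b = (k : ℤ) * b + b := by push_cast; ring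
    rw [e1, e2]
    constructor <;> linarith [h1.1, h1.2, h2.1, h2.2]

/-- The subdiagonal shift matrix. -/
noncomputable def Nm (m : ℕ) : Matrix (Fin m) (Fin m) ℝ :=
  Matrix.of fun i j => if (i : ℕ) = (j : ℕ) + 1 then 1 else 0

lemma D_eq (m : ℕ) : Dmat m = 1 - Nm m := by
  ext i j
  simp only [Dmat, Nm, Matrix.of_apply, Matrix.sub_apply, Matrix.one_apply]
  have : i = j ↔ (i : ℕ) = (j : ℕ) := Fin.ext_iff
  split_ifs <;> simp_all <;> omega

lemma sum_indicator (m c : ℕ) :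
    (∑ l : Fin m, if (l : ℕ) = c then (1 : ℝ) else 0) = if c < m then 1 else 0 := by
  by_cases h : c < m
  · rw [if_pos h, Finset.sum_eq_single (⟨c, h⟩ : Fin m)]
    · simp
    · intro l _ hl
      rw [if_neg]
      intro hc; exact hl (Fin.ext hc)
    · simp
  · rw [if_neg h]
    apply Finset.sum_eq_zero
    intro l _
    rw [if_neg]
    have := l.isLt
    omega

lemma NtN_apply (m : ℕ) (i j : Fin m) :
    ((Nm m)ᵀ * Nm m) i j = if (i : ℕ) = (j : ℕ) ∧ (i : ℕ) + 1 < m then 1 else 0 := by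
  rw [Matrix.mul_apply]
  simp only [Matrix.transpose_apply, Nm, Matrix.of_apply]
  have key : ∀ l : Fin m,
      (if (l : ℕ) = (i : ℕ) + 1 then (1 : ℝ) else 0) * (if (l : ℕ) = (j : ℕ) + 1 then 1 else 0)
      = if (i : ℕ) = (j : ℕ) then (if (l : ℕ) = (i : ℕ) + 1 then 1 else 0) else 0 := by
    intro l
    split_ifs <;> first | (exfalso; omega) | norm_num
  rw [Finset.sum_congr rfl fun l _ => key l]
  by_cases hij : (i : ℕ) = (j : ℕ)
  · simp only [if_pos hij]
    rw [sum_indicator]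
    by_cases h2 : (i : ℕ) + 1 < m
    · rw [if_pos h2, if_pos ⟨hij, h2⟩]
    · rw [if_neg h2, if_neg (by tauto)]
  · simp only [if_neg hij]
    rw [Finset.sum_const_zero, if_neg (by tauto)]

lemma NNt_apply (m : ℕ) (i j : Fin m) :
    (Nm m * (Nm m)ᵀ) i j = if (i : ℕ) = (j : ℕ) ∧ 1 ≤ (i : ℕ) then 1 else 0 := by
  rw [Matrix.mul_apply]
  simp only [Matrix.transpose_apply, Nm, Matrix.of_apply]
  have key : ∀ l : Fin m,
      (if (i : ℕ) = (l : ℕ) + 1 then (1 : ℝ) else 0) * (if (j : ℕ) = (l : ℕ) + 1 then 1 else 0)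
      = if (i : ℕ) = (j : ℕ) ∧ 1 ≤ (i : ℕ) then (if (l : ℕ) = (i : ℕ) - 1 then 1 else 0) else 0 := by
    intro l
    split_ifs <;> first | (exfalso; omega) | norm_num
  rw [Finset.sum_congr rfl fun l _ => key l]
  by_cases hc : (i : ℕ) = (j : ℕ) ∧ 1 ≤ (i : ℕ)
  · simp only [if_pos hc]
    rw [sum_indicator, if_pos (by have := i.isLt; omega)]
  · simp only [if_neg hc]
    rw [Finset.sum_const_zero]

lemma qsupp (m : ℕ) (i j : Fin m)
    (h : ((Dmat m)ᵀ * Dmat m - Dmat m * (Dmat m)ᵀ) i j ≠ 0) :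
    ((i : ℕ) = 0 ∧ (j : ℕ) = 0) ∨ ((i : ℕ) = m - 1 ∧ (j : ℕ) = m - 1) := by
  have hQ : (Dmat m)ᵀ * Dmat m - Dmat m * (Dmat m)ᵀ
      = (Nm m)ᵀ * Nm m - Nm m * (Nm m)ᵀ := by
    rw [D_eq]
    simp only [Matrix.transpose_sub, Matrix.transpose_one]
    noncomm_ring
  rw [hQ, Matrix.sub_apply, NtN_apply, NNt_apply] at h
  have hi := i.isLt
  have hj := j.isLt
  split_ifs at h with h1 h2 h2
  · norm_num at h
  · omega
  · omega
  · norm_num at h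

/-- Support of the commutator `[Dᵀ, D^k]`. -/
lemma W_supp (m k : ℕ) : ∀ i j : Fin m,
    ((Dmat m)ᵀ * (Dmat m) ^ k - (Dmat m) ^ k * (Dmat m)ᵀ) i j ≠ 0 →
    ((i : ℕ) < k ∧ (j : ℕ) = 0) ∨ ((i : ℕ) = m - 1 ∧ m - k ≤ (j : ℕ)) := by
  induction k with
  | zero =>
    intro i j h
    rw [pow_zero, mul_one, one_mul, sub_self] at h
    simp at h
  | succ k ih =>
    have key : (Dmat m)ᵀ * (Dmat m) ^ (k + 1) - (Dmat m) ^ (k + 1) * (Dmat m)ᵀ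
        = ((Dmat m)ᵀ * (Dmat m) ^ k - (Dmat m) ^ k * (Dmat m)ᵀ) * Dmat m
          + (Dmat m) ^ k * ((Dmat m)ᵀ * Dmat m - Dmat m * (Dmat m)ᵀ) := by
      rw [pow_succ]
      noncomm_ring
    intro i j h
    rw [key, Matrix.add_apply] at h
    have hcase : (((Dmat m)ᵀ * (Dmat m) ^ k - (Dmat m) ^ k * (Dmat m)ᵀ) * Dmat m) i j ≠ 0
        ∨ ((Dmat m) ^ k * ((Dmat m)ᵀ * Dmat m - Dmat m * (Dmat m)ᵀ)) i j ≠ 0 := by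
      by_contra hc
      push_neg at hc
      rw [hc.1, hc.2, add_zero] at h
      exact h rfl
    rcases hcase with h | h
    · rw [Matrix.mul_apply] at h
      obtain ⟨l, -, hl⟩ := Finset.exists_ne_zero_of_sum_ne_zero h
      have h1 := ih i l (left_ne_zero_of_mul hl)
      have h2 := suppZ_D m l j (right_ne_zero_of_mul hl)
      omega
    · rw [Matrix.mul_apply] at h
      obtain ⟨l, -, hl⟩ := Finset.exists_ne_zero_of_sum_ne_zero h
      have h1 := suppZ_pow (suppZ_D m) k i l (left_ne_zero_of_mul hl)
      have h2 := qsupp m l j (right_ne_zero_of_mul hl)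
      have hi := i.isLt
      omega

/-- Corner support of `C^{(r)}`. -/
lemma Cc_supp (m r : ℕ) : ∀ i j : Fin m,
    ((Dmat m)ᵀ ^ r * (Dmat m) ^ r - ((Dmat m)ᵀ * Dmat m) ^ r) i j ≠ 0 →
    ((i : ℕ) < r ∧ (j : ℕ) < r) ∨ (m - r ≤ (i : ℕ) ∧ m - r ≤ (j : ℕ)) := by
  induction r with
  | zero =>
    intro i j h
    rw [pow_zero, pow_zero, pow_zero, one_mul, sub_self] at h
    simp at h
  | succ r ih =>
    have key : (Dmat m)ᵀ ^ (r + 1) * (Dmat m) ^ (r + 1) - ((Dmat m)ᵀ * Dmat m) ^ (r + 1)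
        = (Dmat m)ᵀ ^ r * ((Dmat m)ᵀ * (Dmat m) ^ r - (Dmat m) ^ r * (Dmat m)ᵀ) * Dmat m
          + ((Dmat m)ᵀ ^ r * (Dmat m) ^ r - ((Dmat m)ᵀ * Dmat m) ^ r) * ((Dmat m)ᵀ * Dmat m) := by
      rw [pow_succ, pow_succ, pow_succ]
      noncomm_ring
    intro i j h
    rw [key, Matrix.add_apply] at h
    have hcase : ((Dmat m)ᵀ ^ r * ((Dmat m)ᵀ * (Dmat m) ^ r - (Dmat m) ^ r * (Dmat m)ᵀ) * Dmat m) i j ≠ 0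
        ∨ (((Dmat m)ᵀ ^ r * (Dmat m) ^ r - ((Dmat m)ᵀ * Dmat m) ^ r) * ((Dmat m)ᵀ * Dmat m)) i j ≠ 0 := by
      by_contra hc
      push_neg at hc
      rw [hc.1, hc.2, add_zero] at h
      exact h rfl
    rcases hcase with h | h
    · rw [Matrix.mul_apply] at h
      obtain ⟨b, -, hb⟩ := Finset.exists_ne_zero_of_sum_ne_zero h
      have hD := suppZ_D m b j (right_ne_zero_of_mul hb)
      have h2 := left_ne_zero_of_mul hb
      rw [Matrix.mul_apply] at h2
      obtain ⟨a, -, ha⟩ := Finset.exists_ne_zero_of_sum_ne_zero h2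
      have hT := suppZ_pow (suppZ_DT m) r i a (left_ne_zero_of_mul ha)
      have hW := W_supp m r a b (right_ne_zero_of_mul ha)
      have hi := i.isLt
      have hj := j.isLt
      omega
    · rw [Matrix.mul_apply] at h
      obtain ⟨l, -, hl⟩ := Finset.exists_ne_zero_of_sum_ne_zero h
      have h1 := ih i l (left_ne_zero_of_mul hl)
      have h2 := suppZ_mul (suppZ_DT m) (suppZ_D m) l j (right_ne_zero_of_mul hl)
      omega

/-- `C^{(r)} = (D*)^r D^r − (D* D)^r` vanishes outside the two `r × r` corner blocks,
and hence has rank at most `2r`. -/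
theorem corner_structure_of_Cr (m r : ℕ) (hr : 0 < r) (hm : 2 * r ≤ m) :
    (∀ i j : Fin m,
      ¬ (((i : ℕ) < r ∧ (j : ℕ) < r) ∨ (m - r ≤ (i : ℕ) ∧ m - r ≤ (j : ℕ))) →
      (((Dmat m)ᵀ ^ r * (Dmat m) ^ r - ((Dmat m)ᵀ * Dmat m) ^ r)) i j = 0) ∧
    ((Dmat m)ᵀ ^ r * (Dmat m) ^ r - ((Dmat m)ᵀ * Dmat m) ^ r).rank ≤ 2 * r := by
  set C : Matrix (Fin m) (Fin m) ℝ :=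
    (Dmat m)ᵀ ^ r * (Dmat m) ^ r - ((Dmat m)ᵀ * Dmat m) ^ r with hC
  have hsupp := Cc_supp m r
  constructor
  · intro i j hij
    by_contra h
    exact hij (hsupp i j h)
  · -- factor C = U * V with V of height 2r
    have he : ∀ k : Fin (2 * r), (if (k : ℕ) < r then (k : ℕ) else m - 2 * r + (k : ℕ)) < m := by
      intro k
      have := k.isLt
      split_ifs <;> omega
    set e : Fin (2 * r) → Fin m := fun k =>
      ⟨if (k : ℕ) < r then (k : ℕ) else m - 2 * r + (k : ℕ), he k⟩ with he'
    have einj : Function.Injective e := by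
      intro a b hab
      have h1 := a.isLt
      have h2 := b.isLt
      rw [Fin.ext_iff] at hab ⊢
      simp only [he'] at hab
      split_ifs at hab <;> omega
    set U : Matrix (Fin m) (Fin (2 * r)) ℝ := Matrix.of fun i k => if i = e k then 1 else 0 with hU
    have hfac : C = U * C.submatrix e id := by
      ext i j
      rw [Matrix.mul_apply]
      by_cases hi : (i : ℕ) < r ∨ m - r ≤ (i : ℕ)
      · have hex : ∃ k : Fin (2 * r), e k = i := by
          rcases hi with hi | hi
          · refine ⟨⟨(i : ℕ), by omega⟩, ?_⟩
            rw [Fin.ext_iff]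
            simp only [he']
            split_ifs <;> omega
          · have hil := i.isLt
            refine ⟨⟨(i : ℕ) - (m - 2 * r), by omega⟩, ?_⟩
            rw [Fin.ext_iff]
            simp only [he']
            split_ifs <;> omega
        obtain ⟨k₀, hk₀⟩ := hex
        rw [Finset.sum_eq_single k₀]
        · simp [hU, hk₀, Matrix.submatrix_apply]
        · intro k _ hk
          have : i ≠ e k := by
            rw [← hk₀]
            intro hc
            exact hk (einj hc.symm)
          simp [hU, this]
        · simp
      · push_neg at hi
        have hz : C i j = 0 := by
          by_contra hc
          have := hsupp i j hc
          omega
        rw [hz]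
        apply (Finset.sum_eq_zero _).symm
        intro k _
        have : i ≠ e k := by
          intro hc
          have hk := k.isLt
          have hv : (i : ℕ) = if (k : ℕ) < r then (k : ℕ) else m - 2 * r + (k : ℕ) := by
            rw [hc]
          have hk := k.isLt
          split_ifs at hv <;> omega
        simp [hU, this]
    calc C.rank = (U * C.submatrix e id).rank := by rw [← hfac]
      _ ≤ (C.submatrix e id).rank := Matrix.rank_mul_le_right U _
      _ ≤ Fintype.card (Fin (2 * r)) := Matrix.rank_le_card_height _
      _ = 2 * r := Fintype.card_fin _
end

section
/- Let D be the m×m difference matrix, r a positive integer with m ≥ 2r. Then for j = 1, …, m, σ_{min(j+2r, m)}(D)^r ≤ σ_j(D^r) ≤ σ_{max(j−2r, 1)}(D)^r, where σ_j denotes the j-th largest singular value. -/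
open Matrix Real

open Module


section coords
variable {m : ℕ}

lemma mulVec_Dmat (x : Fin m → ℝ) (i : Fin m) :
    ((Dmat m) *ᵥ x) i = x i - (if h : (i : ℕ) = 0 then 0 else x ⟨(i:ℕ)-1, by have := i.isLt; omega⟩) := by
  classical
  have hsplit : ∀ j : Fin m, Dmat m i j * x j =
      (if i = j then x j else 0) + (if (i:ℕ) = (j:ℕ)+1 then -x j else 0) := by
    intro j
    simp only [Dmat, Matrix.of_apply]
    rcases eq_or_ne i j with rfl | hij
    · simp
    · have : (i:ℕ) ≠ (j:ℕ) := fun h => hij (Fin.ext h)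
      simp only [this, if_false, hij, if_false]
      split <;> ring
  rw [Matrix.mulVec, dotProduct]
  simp only [hsplit]
  rw [Finset.sum_add_distrib]
  have h1 : (∑ j : Fin m, if i = j then x j else 0) = x i := by simp
  have h2 : (∑ j : Fin m, if (i:ℕ) = (j:ℕ)+1 then -x j else 0)
      = -(if h : (i : ℕ) = 0 then 0 else x ⟨(i:ℕ)-1, by have := i.isLt; omega⟩) := by
    rcases Nat.eq_zero_or_pos (i:ℕ) with h0 | hpos
    · rw [dif_pos h0, neg_zero]
      apply Finset.sum_eq_zero
      intro j _
      have : (i:ℕ) ≠ (j:ℕ)+1 := by omega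
      simp [this]
    · have h0 : (i:ℕ) ≠ 0 := by omega
      rw [dif_neg h0]
      have hi1 : (i:ℕ) - 1 < m := by have := i.isLt; omega
      rw [Finset.sum_eq_single (⟨(i:ℕ)-1, hi1⟩ : Fin m)]
      · have : (i:ℕ) = (((⟨(i:ℕ)-1, hi1⟩ : Fin m)):ℕ) + 1 := by simp; omega
        rw [if_pos this]
      · intro j _ hj
        have : (i:ℕ) ≠ (j:ℕ)+1 := by
          intro h
          apply hj; apply Fin.ext; simp; omega
        simp [this]
      · intro h; exact absurd (Finset.mem_univ _) h
  rw [h1, h2]; ring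

lemma mulVec_Dmat_t (x : Fin m → ℝ) (i : Fin m) :
    ((Dmat m)ᵀ *ᵥ x) i = x i - (if h : (i:ℕ)+1 < m then x ⟨(i:ℕ)+1, h⟩ else 0) := by
  classical
  have hsplit : ∀ j : Fin m, (Dmat m)ᵀ i j * x j =
      (if i = j then x j else 0) + (if (j:ℕ) = (i:ℕ)+1 then -x j else 0) := by
    intro j
    simp only [Dmat, Matrix.transpose_apply, Matrix.of_apply]
    rcases eq_or_ne i j with rfl | hij
    · simp
    · have : (j:ℕ) ≠ (i:ℕ) := fun h => hij (Fin.ext h.symm)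
      simp only [this, if_false, hij, if_false]
      split <;> ring
  rw [Matrix.mulVec, dotProduct]
  simp only [hsplit]
  rw [Finset.sum_add_distrib]
  have h1 : (∑ j : Fin m, if i = j then x j else 0) = x i := by simp
  have h2 : (∑ j : Fin m, if (j:ℕ) = (i:ℕ)+1 then -x j else 0)
      = -(if h : (i:ℕ)+1 < m then x ⟨(i:ℕ)+1, h⟩ else 0) := by
    by_cases h : (i:ℕ)+1 < m
    · rw [dif_pos h]
      rw [Finset.sum_eq_single (⟨(i:ℕ)+1, h⟩ : Fin m)]
      · simp
      · intro j _ hj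
        have : (j:ℕ) ≠ (i:ℕ)+1 := by
          intro hh; apply hj; apply Fin.ext; simp [hh]
        simp [this]
      · intro hh; exact absurd (Finset.mem_univ _) hh
    · rw [dif_neg h, neg_zero]
      apply Finset.sum_eq_zero
      intro j _
      have : (j:ℕ) ≠ (i:ℕ)+1 := by have := j.isLt; omega
      simp [this]
  rw [h1, h2]; ring

end coords

section supp
variable {m : ℕ}

lemma mulVec_Dmat' (x : Fin m → ℝ) (i k : Fin m) (hk : (k:ℕ)+1 = (i:ℕ)) :
    ((Dmat m) *ᵥ x) i = x i - x k := by
  rw [mulVec_Dmat, dif_neg (by omega)]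
  congr 1
  exact congrArg x (Fin.ext (by simp; omega))

lemma mulVec_Dmat_t' (x : Fin m → ℝ) (i k : Fin m) (hk : (i:ℕ)+1 = (k:ℕ)) :
    ((Dmat m)ᵀ *ᵥ x) i = x i - x k := by
  rw [mulVec_Dmat_t, dif_pos (by have := k.isLt; omega)]
  congr 1
  exact congrArg x (Fin.ext hk)

def SuppV (m a b : ℕ) (x : Fin m → ℝ) : Prop :=
  ∀ i : Fin m, a ≤ (i:ℕ) → (i:ℕ) < m - b → x i = 0

lemma SuppV.mono {a b a' b' : ℕ} {x : Fin m → ℝ} (h : SuppV m a b x)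
    (ha : a ≤ a') (hb : b ≤ b') : SuppV m a' b' x :=
  fun i hi1 hi2 => h i (by omega) (by omega)

lemma SuppV.zero (a b : ℕ) : SuppV m a b 0 := fun _ _ _ => rfl

lemma SuppV.add {a b : ℕ} {x y : Fin m → ℝ} (hx : SuppV m a b x) (hy : SuppV m a b y) :
    SuppV m a b (x + y) := fun i h1 h2 => by
  simp [Pi.add_apply, hx i h1 h2, hy i h1 h2]

lemma SuppV.applyD {a b : ℕ} {x : Fin m → ℝ} (h : SuppV m a b x) :
    SuppV m (a+1) b ((Dmat m) *ᵥ x) := by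
  intro i h1 h2
  rw [mulVec_Dmat' x i ⟨(i:ℕ)-1, by have := i.isLt; omega⟩ (by simp; omega)]
  rw [h i (by omega) h2, h _ (by simp; omega) (by simp; omega)]
  ring

lemma SuppV.applyDt {a b : ℕ} {x : Fin m → ℝ} (h : SuppV m a b x) :
    SuppV m a (b+1) ((Dmat m)ᵀ *ᵥ x) := by
  intro i h1 h2
  rw [mulVec_Dmat_t' x i ⟨(i:ℕ)+1, by omega⟩ (by simp)]
  rw [h i h1 (by omega), h _ (by simp; omega) (by simp; omega)]
  ring

def SuppM (m a b : ℕ) (M : Matrix (Fin m) (Fin m) ℝ) : Prop :=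
  ∀ x, SuppV m a b (M *ᵥ x)

lemma suppM_E : SuppM m 1 1 ((Dmat m)ᵀ * Dmat m - Dmat m * (Dmat m)ᵀ) := by
  intro x i h1 h2
  have him : (i:ℕ) < m := i.isLt
  set iminus : Fin m := ⟨(i:ℕ)-1, by omega⟩ with him_def
  set iplus : Fin m := ⟨(i:ℕ)+1, by omega⟩ with hip_def
  have hk1 : (iminus:ℕ)+1 = (i:ℕ) := by simp [him_def]; omega
  have hk2 : (i:ℕ)+1 = (iplus:ℕ) := by simp [hip_def]
  rw [Matrix.sub_mulVec, Pi.sub_apply, ← Matrix.mulVec_mulVec, ← Matrix.mulVec_mulVec]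
  rw [mulVec_Dmat_t' _ i iplus hk2, mulVec_Dmat' x i iminus hk1,
      mulVec_Dmat' x iplus i (by omega),
      mulVec_Dmat' _ i iminus hk1, mulVec_Dmat_t' x i iplus hk2,
      mulVec_Dmat_t' x iminus i (by omega)]
  ring

lemma suppM_pow_sub : ∀ k : ℕ, SuppM m k k (((Dmat m)ᵀ * Dmat m)^k - (Dmat m * (Dmat m)ᵀ)^k) := by
  intro k
  induction k with
  | zero => intro x i h1 h2; simp
  | succ k ih =>
    have hid : ((Dmat m)ᵀ * Dmat m)^(k+1) - (Dmat m * (Dmat m)ᵀ)^(k+1)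
        = ((Dmat m)ᵀ * Dmat m) * (((Dmat m)ᵀ * Dmat m)^k - (Dmat m * (Dmat m)ᵀ)^k)
          + ((Dmat m)ᵀ * Dmat m - Dmat m * (Dmat m)ᵀ) * (Dmat m * (Dmat m)ᵀ)^k := by
      rw [pow_succ', pow_succ']
      noncomm_ring
    rw [hid]
    intro x
    rw [Matrix.add_mulVec]
    apply SuppV.add
    · rw [← Matrix.mulVec_mulVec, ← Matrix.mulVec_mulVec]
      exact ((ih x).applyD).applyDt
    · rw [← Matrix.mulVec_mulVec]
      exact (suppM_E _).mono (by omega) (by omega)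

lemma telescope : ∀ k : ℕ, (Dmat m)ᵀ * (Dmat m * (Dmat m)ᵀ)^k * Dmat m = ((Dmat m)ᵀ * Dmat m)^(k+1) := by
  intro k
  induction k with
  | zero => simp [pow_one]
  | succ k ih =>
    rw [pow_succ, ← Matrix.mul_assoc, ← Matrix.mul_assoc]
    rw [pow_succ, ← ih]
    exact Matrix.mul_assoc _ _ _

lemma suppM_C : ∀ k : ℕ, SuppM m k k (((Dmat m)ᵀ)^k * (Dmat m)^k - ((Dmat m)ᵀ * Dmat m)^k) := by
  intro k
  induction k with
  | zero => intro x i h1 h2; simp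
  | succ k ih =>
    have hid : ((Dmat m)ᵀ)^(k+1) * (Dmat m)^(k+1) - ((Dmat m)ᵀ * Dmat m)^(k+1)
        = (Dmat m)ᵀ * ((((Dmat m)ᵀ)^k * (Dmat m)^k - ((Dmat m)ᵀ * Dmat m)^k)
            + (((Dmat m)ᵀ * Dmat m)^k - (Dmat m * (Dmat m)ᵀ)^k)) * Dmat m := by
      have ht := telescope (m := m) k
      rw [Matrix.mul_add, Matrix.add_mul]
      rw [pow_succ', pow_succ]
      rw [Matrix.mul_sub, Matrix.sub_mul, Matrix.mul_sub, Matrix.sub_mul]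
      rw [ht]
      noncomm_ring
    rw [hid]
    intro x
    rw [← Matrix.mulVec_mulVec, ← Matrix.mulVec_mulVec]
    have hmid : SuppV m k k ((((((Dmat m)ᵀ)^k * (Dmat m)^k - ((Dmat m)ᵀ * Dmat m)^k)
            + (((Dmat m)ᵀ * Dmat m)^k - (Dmat m * (Dmat m)ᵀ)^k))) *ᵥ (Dmat m *ᵥ x)) := by
      rw [Matrix.add_mulVec]
      exact (ih _).add (suppM_pow_sub k _)
    exact (hmid.applyDt).mono (by omega) (by omega)

end supp

section spectral
variable {m : ℕ}

lemma inner_eq_dot (x y : EuclideanSpace ℝ (Fin m)) :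
    (inner ℝ x y : ℝ) = (x : Fin m → ℝ) ⬝ᵥ (y : Fin m → ℝ) := by
  simp [PiLp.inner_apply, RCLike.inner_apply, dotProduct, mul_comm]

lemma isDescSV_spec (A : Matrix (Fin m) (Fin m) ℝ) {σ : Fin m → ℝ} (h : IsDescSV A σ) :
    ∃ w : Fin m → (Fin m → ℝ),
      (∀ i j, w i ⬝ᵥ w j = if i = j then 1 else 0) ∧
      (∀ x : Fin m → ℝ, x = ∑ i, (w i ⬝ᵥ x) • w i) ∧
      (∀ j, (Aᴴ * A) *ᵥ w j = (σ j ^ 2) • w j) ∧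
      (∀ j, 0 ≤ σ j) := by
  obtain ⟨hmono, e, he⟩ := h
  have hH := Matrix.isHermitian_conjTranspose_mul_self A
  have hnn : ∀ i, 0 ≤ hH.eigenvalues i := fun i =>
    Matrix.eigenvalues_conjTranspose_mul_self_nonneg A i
  refine ⟨fun j => (hH.eigenvectorBasis (e.symm j) : Fin m → ℝ), ?_, ?_, ?_, ?_⟩
  · intro i j
    have horth := hH.eigenvectorBasis.orthonormal
    rw [orthonormal_iff_ite] at horth
    have := horth (e.symm i) (e.symm j)
    rw [inner_eq_dot] at this
    rw [this]
    by_cases hij : i = j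
    · simp [hij]
    · have : e.symm i ≠ e.symm j := fun hh => hij (e.symm.injective hh)
      simp [hij, this]
  · intro x
    have hx := congrArg WithLp.ofLp (hH.eigenvectorBasis.sum_repr' (WithLp.toLp 2 x))
    simp only [inner_eq_dot, WithLp.ofLp_toLp, WithLp.ofLp_sum, WithLp.ofLp_smul] at hx
    rw [← Equiv.sum_comp e.symm
      (fun i => ((hH.eigenvectorBasis i : Fin m → ℝ) ⬝ᵥ x) • (hH.eigenvectorBasis i : Fin m → ℝ))] at hx
    exact hx.symm
  · intro j
    have := hH.mulVec_eigenvectorBasis (e.symm j)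
    have hval : σ j ^ 2 = hH.eigenvalues (e.symm j) := by
      have h1 := he (e.symm j)
      rw [Equiv.apply_symm_apply] at h1
      rw [h1, sq_sqrt (hnn _)]
    rw [hval]
    exact this
  · intro j
    have h1 := he (e.symm j)
    rw [Equiv.apply_symm_apply] at h1
    rw [h1]
    exact Real.sqrt_nonneg _

end spectral

section qf
variable {m : ℕ} {M : Matrix (Fin m) (Fin m) ℝ} {lam : Fin m → ℝ} {w : Fin m → Fin m → ℝ}

lemma eig_pow (heig : ∀ i, M *ᵥ w i = lam i • w i) (k : ℕ) (i : Fin m) :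
    (M ^ k) *ᵥ w i = (lam i ^ k) • w i := by
  induction k with
  | zero => simp
  | succ k ih =>
    rw [pow_succ, ← Matrix.mulVec_mulVec, heig, Matrix.mulVec_smul, ih, smul_smul, pow_succ]
    ring_nf

lemma parseval (hexp : ∀ x : Fin m → ℝ, x = ∑ i, (w i ⬝ᵥ x) • w i) (x y : Fin m → ℝ) :
    x ⬝ᵥ y = ∑ i, (w i ⬝ᵥ x) * (w i ⬝ᵥ y) := by
  conv_lhs => rw [hexp x]
  simp only [dotProduct, Finset.sum_apply, Pi.smul_apply, smul_eq_mul, Finset.sum_mul]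
  rw [Finset.sum_comm]
  exact Finset.sum_congr rfl fun i _ => by
    rw [Finset.sum_comm]
    exact Finset.sum_congr rfl fun j _ => by
      rw [Finset.mul_sum]
      exact Finset.sum_congr rfl fun l _ => by ring

lemma dot_mulVec_pow (hsym : Mᵀ = M) (heig : ∀ i, M *ᵥ w i = lam i • w i) (k : ℕ)
    (x : Fin m → ℝ) (i : Fin m) :
    w i ⬝ᵥ ((M ^ k) *ᵥ x) = lam i ^ k * (w i ⬝ᵥ x) := by
  rw [Matrix.dotProduct_mulVec]
  have hv : w i ᵥ* (M ^ k) = (lam i ^ k) • w i := by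
    have h1 : w i ᵥ* (M ^ k) = ((M ^ k)ᵀ) *ᵥ w i := by
      rw [← Matrix.vecMul_transpose, Matrix.transpose_transpose]
    rw [h1, Matrix.transpose_pow, hsym, eig_pow heig]
  rw [hv, smul_dotProduct, smul_eq_mul]

lemma qf_formula (hsym : Mᵀ = M) (heig : ∀ i, M *ᵥ w i = lam i • w i)
    (hexp : ∀ x : Fin m → ℝ, x = ∑ i, (w i ⬝ᵥ x) • w i) (k : ℕ) (x : Fin m → ℝ) :
    x ⬝ᵥ ((M ^ k) *ᵥ x) = ∑ i, lam i ^ k * (w i ⬝ᵥ x) ^ 2 := by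
  rw [parseval hexp x ((M ^ k) *ᵥ x)]
  exact Finset.sum_congr rfl fun i _ => by rw [dot_mulVec_pow hsym heig]; ring

lemma normsq_formula (hexp : ∀ x : Fin m → ℝ, x = ∑ i, (w i ⬝ᵥ x) • w i) (x : Fin m → ℝ) :
    x ⬝ᵥ x = ∑ i, (w i ⬝ᵥ x) ^ 2 := by
  rw [parseval hexp x x]
  exact Finset.sum_congr rfl fun i _ => (sq _).symm

lemma qf_le (hsym : Mᵀ = M) (heig : ∀ i, M *ᵥ w i = lam i • w i)
    (hexp : ∀ x : Fin m → ℝ, x = ∑ i, (w i ⬝ᵥ x) • w i) (k : ℕ) (x : Fin m → ℝ)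
    (t : ℝ) (T : Set (Fin m)) (hT : ∀ i ∈ T, w i ⬝ᵥ x = 0)
    (ht : ∀ i ∉ T, lam i ^ k ≤ t) :
    x ⬝ᵥ ((M ^ k) *ᵥ x) ≤ t * (x ⬝ᵥ x) := by
  classical
  rw [qf_formula hsym heig hexp, normsq_formula hexp, Finset.mul_sum]
  apply Finset.sum_le_sum
  intro i _
  by_cases hi : i ∈ T
  · rw [hT i hi]; simp
  · exact mul_le_mul_of_nonneg_right (ht i hi) (sq_nonneg _)

lemma qf_ge (hsym : Mᵀ = M) (heig : ∀ i, M *ᵥ w i = lam i • w i)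
    (hexp : ∀ x : Fin m → ℝ, x = ∑ i, (w i ⬝ᵥ x) • w i) (k : ℕ) (x : Fin m → ℝ)
    (t : ℝ) (T : Set (Fin m)) (hT : ∀ i ∈ T, w i ⬝ᵥ x = 0)
    (ht : ∀ i ∉ T, t ≤ lam i ^ k) :
    t * (x ⬝ᵥ x) ≤ x ⬝ᵥ ((M ^ k) *ᵥ x) := by
  classical
  rw [qf_formula hsym heig hexp, normsq_formula hexp, Finset.mul_sum]
  apply Finset.sum_le_sum
  intro i _
  by_cases hi : i ∈ T
  · rw [hT i hi]; simp
  · exact mul_le_mul_of_nonneg_right (ht i hi) (sq_nonneg _)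

lemma dot_self_pos {x : Fin m → ℝ} (hx : x ≠ 0) : 0 < x ⬝ᵥ x := by
  obtain ⟨j, hj⟩ := Function.ne_iff.mp hx
  have h1 : 0 < x j * x j := mul_self_pos.mpr hj
  have h2 : x j * x j ≤ ∑ i, x i * x i :=
    Finset.single_le_sum (fun i _ => mul_self_nonneg (x i)) (Finset.mem_univ j)
  calc (0:ℝ) < x j * x j := h1
    _ ≤ x ⬝ᵥ x := h2

end qf

section dims
variable {m : ℕ}

lemma finrank_ker_ge {W : Type*} [AddCommGroup W] [Module ℝ W] [FiniteDimensional ℝ W]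
    (f : (Fin m → ℝ) →ₗ[ℝ] W) :
    m ≤ finrank ℝ (LinearMap.ker f) + finrank ℝ W := by
  have h := LinearMap.finrank_range_add_finrank_ker f
  have h2 : finrank ℝ (LinearMap.range f) ≤ finrank ℝ W := Submodule.finrank_le _
  have h3 : finrank ℝ (Fin m → ℝ) = m := by
    rw [Module.finrank_fintype_fun_eq_card, Fintype.card_fin]
  omega

lemma inf_dim (S T : Submodule ℝ (Fin m → ℝ)) :
    finrank ℝ S + finrank ℝ T ≤ m + finrank ℝ (S ⊓ T : Submodule ℝ (Fin m → ℝ)) := by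
  have h := Submodule.finrank_sup_add_finrank_inf_eq S T
  have h2 : finrank ℝ (S ⊔ T : Submodule ℝ (Fin m → ℝ)) ≤ m := by
    have := Submodule.finrank_le (S ⊔ T : Submodule ℝ (Fin m → ℝ))
    rwa [Module.finrank_fintype_fun_eq_card, Fintype.card_fin] at this
  omega

lemma exists_ne_zero_of_finrank_pos {U : Submodule ℝ (Fin m → ℝ)} (h : 1 ≤ finrank ℝ U) :
    ∃ x ∈ U, x ≠ 0 := by
  by_contra hc
  push_neg at hc
  have : U = ⊥ := by
    rw [Submodule.eq_bot_iff]
    exact hc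
  rw [this, finrank_bot] at h
  omega

lemma card_subtype_lt (c : ℕ) : Fintype.card {l : Fin m // (l:ℕ) < c} ≤ c := by
  have : Function.Injective (fun l : {l : Fin m // (l:ℕ) < c} => (⟨(l:Fin m), l.2⟩ : Fin c)) := by
    intro a b hab
    ext
    simpa [Fin.ext_iff] using hab
  simpa using Fintype.card_le_of_injective _ this

lemma card_subtype_gt (c : ℕ) : Fintype.card {l : Fin m // c < (l:ℕ)} ≤ m - 1 - c := by
  have : Function.Injective (fun l : {l : Fin m // c < (l:ℕ)} =>
      (⟨(l : Fin m) - c - 1, by have := (l:Fin m).isLt; have := l.2; omega⟩ : Fin (m - 1 - c))) := by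
    intro a b hab
    have ha := a.2; have hb := b.2
    simp only [Fin.mk.injEq] at hab
    ext
    · omega
  simpa using Fintype.card_le_of_injective _ this

lemma card_subtype_band (r : ℕ) (hr : 0 < r) (hm : 2 * r ≤ m) :
    Fintype.card {i : Fin m // (i:ℕ) < r ∨ m - r ≤ (i:ℕ)} ≤ 2 * r := by
  have : Function.Injective (fun l : {i : Fin m // (i:ℕ) < r ∨ m - r ≤ (i:ℕ)} =>
      (⟨if ((l:Fin m):ℕ) < r then ((l:Fin m):ℕ) else ((l:Fin m):ℕ) - (m - 2*r),
        by have := (l:Fin m).isLt; have := l.2; split <;> omega⟩ : Fin (2*r))) := by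
    intro a b hab
    have ha := a.2; have hb := b.2
    have ha' := (a:Fin m).isLt; have hb' := (b:Fin m).isLt
    simp only [Fin.mk.injEq] at hab
    ext
    · split at hab <;> split at hab <;> omega
  simpa using Fintype.card_le_of_injective _ this

end dims

lemma conjT_real {m n : ℕ} (M : Matrix (Fin m) (Fin n) ℝ) : Mᴴ = Mᵀ := by
  ext i j
  simp [Matrix.conjTranspose_apply]

noncomputable def dpLin {m : ℕ} (v : Fin m → ℝ) : (Fin m → ℝ) →ₗ[ℝ] ℝ where
  toFun x := v ⬝ᵥ x
  map_add' x y := by simp [dotProduct_add]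
  map_smul' c x := by simp [dotProduct_smul]

@[simp] lemma dpLin_apply {m : ℕ} (v x : Fin m → ℝ) : dpLin v x = v ⬝ᵥ x := rfl

lemma normMsq {m : ℕ} (M : Matrix (Fin m) (Fin m) ℝ) (y : Fin m → ℝ) :
    y ⬝ᵥ ((Mᴴ * M) *ᵥ y) = (M *ᵥ y) ⬝ᵥ (M *ᵥ y) := by
  rw [conjT_real, ← Matrix.mulVec_mulVec, Matrix.dotProduct_mulVec, Matrix.vecMul_transpose]

lemma le_of_sq_le_sq' {a b : ℝ} (hb : 0 ≤ b) (h : a ^ 2 ≤ b ^ 2) : a ≤ b := by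
  by_contra hc
  push_neg at hc
  exact absurd h (not_le.mpr (pow_lt_pow_left₀ hc hb (by norm_num)))

noncomputable def kerGT {m : ℕ} (w : Fin m → Fin m → ℝ) (c : ℕ) : Submodule ℝ (Fin m → ℝ) :=
  LinearMap.ker (LinearMap.pi (fun l : {l : Fin m // c < (l:ℕ)} => dpLin (w l.1)))

noncomputable def kerLT {m : ℕ} (w : Fin m → Fin m → ℝ) (c : ℕ) : Submodule ℝ (Fin m → ℝ) :=
  LinearMap.ker (LinearMap.pi (fun l : {l : Fin m // (l:ℕ) < c} => dpLin (w l.1)))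

lemma mem_kerGT {m : ℕ} {w : Fin m → Fin m → ℝ} {c : ℕ} {x : Fin m → ℝ} :
    x ∈ kerGT w c ↔ ∀ l : Fin m, c < (l:ℕ) → w l ⬝ᵥ x = 0 := by
  simp [kerGT, LinearMap.mem_ker, funext_iff, LinearMap.pi_apply, Subtype.forall]

lemma mem_kerLT {m : ℕ} {w : Fin m → Fin m → ℝ} {c : ℕ} {x : Fin m → ℝ} :
    x ∈ kerLT w c ↔ ∀ l : Fin m, (l:ℕ) < c → w l ⬝ᵥ x = 0 := by
  simp [kerLT, LinearMap.mem_ker, funext_iff, LinearMap.pi_apply, Subtype.forall]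

lemma finrank_kerGT {m : ℕ} (w : Fin m → Fin m → ℝ) (c : ℕ) :
    m ≤ finrank ℝ (kerGT w c) + (m - 1 - c) := by
  have h := finrank_ker_ge (LinearMap.pi (fun l : {l : Fin m // c < (l:ℕ)} => dpLin (w l.1)))
  rw [Module.finrank_fintype_fun_eq_card] at h
  have h3 := card_subtype_gt (m := m) c
  unfold kerGT
  omega

lemma finrank_kerLT {m : ℕ} (w : Fin m → Fin m → ℝ) (c : ℕ) :
    m ≤ finrank ℝ (kerLT w c) + c := by
  have h := finrank_ker_ge (LinearMap.pi (fun l : {l : Fin m // (l:ℕ) < c} => dpLin (w l.1)))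
  rw [Module.finrank_fintype_fun_eq_card] at h
  have h3 := card_subtype_lt (m := m) c
  unfold kerLT
  omega

/-- For `m ≥ 2r`, `σ_{min(j+2r, m)}(D)^r ≤ σ_j(D^r) ≤ σ_{max(j−2r, 1)}(D)^r`
for `j = 1, …, m` (1-based, singular values in descending order). -/
theorem singular_values_of_Dr_interlacing (m r : ℕ) (hr : 0 < r) (hm : 2 * r ≤ m)
    (σD σDr : Fin m → ℝ)
    (hσD : IsDescSV (Dmat m) σD) (hσDr : IsDescSV ((Dmat m) ^ r) σDr) (j : Fin m) :
    σD ⟨min ((j : ℕ) + 2 * r) (m - 1), by have := j.isLt; omega⟩ ^ r ≤ σDr j ∧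
    σDr j ≤ σD ⟨(j : ℕ) - 2 * r, by have := j.isLt; omega⟩ ^ r := by
  classical
  have hm0 : 0 < m := by omega
  have hm1 : m - 1 < m := by omega
  have hjm : (j:ℕ) < m := j.isLt
  have hmonoA : Antitone σD := hσD.1
  have hmonoB : Antitone σDr := hσDr.1
  obtain ⟨wA, horthA, hexpA, heigA, hnnA⟩ := isDescSV_spec (Dmat m) hσD
  obtain ⟨wB, horthB, hexpB, heigB, hnnB⟩ := isDescSV_spec ((Dmat m) ^ r) hσDr
  set D := Dmat m with hD
  set A : Matrix (Fin m) (Fin m) ℝ := Dᴴ * D with hA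
  set B : Matrix (Fin m) (Fin m) ℝ := (D ^ r)ᴴ * (D ^ r) with hB
  have hsymA : Aᵀ = A := by
    rw [hA, conjT_real, Matrix.transpose_mul, Matrix.transpose_transpose]
  have hsymB : Bᵀ = B := by
    rw [hB, conjT_real, Matrix.transpose_mul, Matrix.transpose_transpose]
  set Cm : Matrix (Fin m) (Fin m) ℝ := (Dᵀ) ^ r * D ^ r - (Dᵀ * D) ^ r with hCm
  have hBAC : B = A ^ r + Cm := by
    rw [hB, hA, hCm, conjT_real, conjT_real, Matrix.transpose_pow]
    noncomm_ring
  -- the kernel of the perturbation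
  set ψ : (Fin m → ℝ) →ₗ[ℝ] ({i : Fin m // (i:ℕ) < r ∨ m - r ≤ (i:ℕ)} → ℝ) :=
    LinearMap.pi (fun i : {i : Fin m // (i:ℕ) < r ∨ m - r ≤ (i:ℕ)} => dpLin (Cm i.1)) with hψ
  set S2 : Submodule ℝ (Fin m → ℝ) := LinearMap.ker ψ with hS2
  have hS2fr : m ≤ finrank ℝ S2 + 2 * r := by
    have h := finrank_ker_ge ψ
    rw [Module.finrank_fintype_fun_eq_card] at h
    rw [← hS2] at h
    have h3 := card_subtype_band (m := m) r hr hm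
    omega
  have hS2zero : ∀ x ∈ S2, Cm *ᵥ x = 0 := by
    intro x hx
    funext i
    by_cases hbad : (i:ℕ) < r ∨ m - r ≤ (i:ℕ)
    · have := congrFun ((LinearMap.mem_ker).mp hx) ⟨i, hbad⟩
      exact (by simpa [hψ, LinearMap.pi_apply] using this : Cm i ⬝ᵥ x = 0)
    · push_neg at hbad
      exact suppM_C r x i hbad.1 hbad.2
  -- quadratic form facts
  have hQB : ∀ x : Fin m → ℝ, x ⬝ᵥ (B *ᵥ x) = x ⬝ᵥ ((A ^ r) *ᵥ x) + x ⬝ᵥ (Cm *ᵥ x) := by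
    intro x
    rw [hBAC, Matrix.add_mulVec, dotProduct_add]
  -- operator-norm style bounds
  have hQA_le : ∀ y : Fin m → ℝ, y ⬝ᵥ (A *ᵥ y) ≤ σD ⟨0, hm0⟩ ^ 2 * (y ⬝ᵥ y) := by
    intro y
    have := qf_le hsymA heigA hexpA 1 y (σD ⟨0, hm0⟩ ^ 2) ∅ (by simp)
      (fun i _ => by
        rw [pow_one]
        exact pow_le_pow_left₀ (hnnA i) (hmonoA (by simp [Fin.le_def])) 2)
    rwa [pow_one] at this
  have hQA_ge : ∀ y : Fin m → ℝ, σD ⟨m-1, hm1⟩ ^ 2 * (y ⬝ᵥ y) ≤ y ⬝ᵥ (A *ᵥ y) := by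
    intro y
    have := qf_ge hsymA heigA hexpA 1 y (σD ⟨m-1, hm1⟩ ^ 2) ∅ (by simp)
      (fun i _ => by
        rw [pow_one]
        exact pow_le_pow_left₀ (hnnA ⟨m-1, hm1⟩) (hmonoA (by simp [Fin.le_def]; omega)) 2)
    rwa [pow_one] at this
  have key_up : ∀ (s : ℕ) (x : Fin m → ℝ),
      (D ^ s *ᵥ x) ⬝ᵥ (D ^ s *ᵥ x) ≤ (σD ⟨0, hm0⟩ ^ 2) ^ s * (x ⬝ᵥ x) := by
    intro s
    induction s with
    | zero => intro x; simp [Matrix.one_mulVec]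
    | succ s ih =>
      intro x
      rw [pow_succ' D s, ← Matrix.mulVec_mulVec]
      calc (D *ᵥ (D ^ s *ᵥ x)) ⬝ᵥ (D *ᵥ (D ^ s *ᵥ x))
          = (D ^ s *ᵥ x) ⬝ᵥ (A *ᵥ (D ^ s *ᵥ x)) := (normMsq D _).symm
        _ ≤ σD ⟨0, hm0⟩ ^ 2 * ((D ^ s *ᵥ x) ⬝ᵥ (D ^ s *ᵥ x)) := hQA_le _
        _ ≤ σD ⟨0, hm0⟩ ^ 2 * ((σD ⟨0, hm0⟩ ^ 2) ^ s * (x ⬝ᵥ x)) :=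
            mul_le_mul_of_nonneg_left (ih x) (sq_nonneg _)
        _ = (σD ⟨0, hm0⟩ ^ 2) ^ (s+1) * (x ⬝ᵥ x) := by ring
  have key_lo : ∀ (s : ℕ) (x : Fin m → ℝ),
      (σD ⟨m-1, hm1⟩ ^ 2) ^ s * (x ⬝ᵥ x) ≤ (D ^ s *ᵥ x) ⬝ᵥ (D ^ s *ᵥ x) := by
    intro s
    induction s with
    | zero => intro x; simp [Matrix.one_mulVec]
    | succ s ih =>
      intro x
      rw [pow_succ' D s, ← Matrix.mulVec_mulVec]
      calc (σD ⟨m-1, hm1⟩ ^ 2) ^ (s+1) * (x ⬝ᵥ x)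
          = σD ⟨m-1, hm1⟩ ^ 2 * ((σD ⟨m-1, hm1⟩ ^ 2) ^ s * (x ⬝ᵥ x)) := by ring
        _ ≤ σD ⟨m-1, hm1⟩ ^ 2 * ((D ^ s *ᵥ x) ⬝ᵥ (D ^ s *ᵥ x)) :=
            mul_le_mul_of_nonneg_left (ih x) (sq_nonneg _)
        _ ≤ (D ^ s *ᵥ x) ⬝ᵥ (A *ᵥ (D ^ s *ᵥ x)) := hQA_ge _
        _ = (D *ᵥ (D ^ s *ᵥ x)) ⬝ᵥ (D *ᵥ (D ^ s *ᵥ x)) := normMsq D _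
  -- middle cases
  have main_up : ∀ i₀ : Fin m, (i₀:ℕ) + 2*r ≤ (j:ℕ) → σDr j ^ 2 ≤ (σD i₀ ^ 2) ^ r := by
    intro i₀ hi₀
    set S1 := kerGT wB (j:ℕ) with hS1
    set S3 := kerLT wA (i₀:ℕ) with hS3
    have f1 := finrank_kerGT wB (j:ℕ)
    have f3 := finrank_kerLT wA (i₀:ℕ)
    rw [← hS1] at f1
    rw [← hS3] at f3
    have d12 := inf_dim S1 S2
    have d123 := inf_dim (S1 ⊓ S2) S3
    have hi₀m : (i₀:ℕ) < m := i₀.isLt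
    have hpos : 1 ≤ finrank ℝ ((S1 ⊓ S2) ⊓ S3 : Submodule ℝ (Fin m → ℝ)) := by omega
    obtain ⟨x, hxmem, hxne⟩ := exists_ne_zero_of_finrank_pos hpos
    have hx1 : x ∈ S1 := (Submodule.mem_inf.mp (Submodule.mem_inf.mp hxmem).1).1
    have hx2 : x ∈ S2 := (Submodule.mem_inf.mp (Submodule.mem_inf.mp hxmem).1).2
    have hx3 : x ∈ S3 := (Submodule.mem_inf.mp hxmem).2
    have hlow : σDr j ^ 2 * (x ⬝ᵥ x) ≤ x ⬝ᵥ (B *ᵥ x) := by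
      have := qf_ge hsymB heigB hexpB 1 x (σDr j ^ 2) {l | (j:ℕ) < (l:ℕ)}
        (fun l hl => (mem_kerGT.mp hx1) l hl)
        (fun l hl => by
          rw [pow_one]
          have : (l:ℕ) ≤ (j:ℕ) := by simpa using hl
          exact pow_le_pow_left₀ (hnnB j) (hmonoB (by simp [Fin.le_def, this])) 2)
      rwa [pow_one] at this
    have hhigh : x ⬝ᵥ ((A ^ r) *ᵥ x) ≤ (σD i₀ ^ 2) ^ r * (x ⬝ᵥ x) := by
      apply qf_le hsymA heigA hexpA r x ((σD i₀ ^ 2) ^ r) {l | (l:ℕ) < (i₀:ℕ)}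
        (fun l hl => (mem_kerLT.mp hx3) l hl)
      intro l hl
      have : (i₀:ℕ) ≤ (l:ℕ) := by simpa using hl
      have h1 : σD l ≤ σD i₀ := hmonoA (by simp [Fin.le_def, this])
      exact pow_le_pow_left₀ (sq_nonneg _) (pow_le_pow_left₀ (hnnA l) h1 2) r
    have hmid : x ⬝ᵥ (B *ᵥ x) = x ⬝ᵥ ((A ^ r) *ᵥ x) := by
      rw [hQB x, hS2zero x hx2, dotProduct_zero, add_zero]
    have hfin : σDr j ^ 2 * (x ⬝ᵥ x) ≤ (σD i₀ ^ 2) ^ r * (x ⬝ᵥ x) :=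
      le_trans hlow (le_trans (le_of_eq hmid) hhigh)
    exact le_of_mul_le_mul_right hfin (dot_self_pos hxne)
  have main_lo : ∀ i₁ : Fin m, (j:ℕ) + 2*r ≤ (i₁:ℕ) → (σD i₁ ^ 2) ^ r ≤ σDr j ^ 2 := by
    intro i₁ hi₁
    set S1 := kerLT wB (j:ℕ) with hS1
    set S3 := kerGT wA (i₁:ℕ) with hS3
    have f1 := finrank_kerLT wB (j:ℕ)
    have f3 := finrank_kerGT wA (i₁:ℕ)
    rw [← hS1] at f1
    rw [← hS3] at f3
    have d12 := inf_dim S1 S2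
    have d123 := inf_dim (S1 ⊓ S2) S3
    have hi₁m : (i₁:ℕ) < m := i₁.isLt
    have hpos : 1 ≤ finrank ℝ ((S1 ⊓ S2) ⊓ S3 : Submodule ℝ (Fin m → ℝ)) := by omega
    obtain ⟨x, hxmem, hxne⟩ := exists_ne_zero_of_finrank_pos hpos
    have hx1 : x ∈ S1 := (Submodule.mem_inf.mp (Submodule.mem_inf.mp hxmem).1).1
    have hx2 : x ∈ S2 := (Submodule.mem_inf.mp (Submodule.mem_inf.mp hxmem).1).2
    have hx3 : x ∈ S3 := (Submodule.mem_inf.mp hxmem).2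
    have hlow : x ⬝ᵥ (B *ᵥ x) ≤ σDr j ^ 2 * (x ⬝ᵥ x) := by
      have := qf_le hsymB heigB hexpB 1 x (σDr j ^ 2) {l | (l:ℕ) < (j:ℕ)}
        (fun l hl => (mem_kerLT.mp hx1) l hl)
        (fun l hl => by
          rw [pow_one]
          have : (j:ℕ) ≤ (l:ℕ) := by simpa using hl
          exact pow_le_pow_left₀ (hnnB l) (hmonoB (by simp [Fin.le_def, this])) 2)
      rwa [pow_one] at this
    have hhigh : (σD i₁ ^ 2) ^ r * (x ⬝ᵥ x) ≤ x ⬝ᵥ ((A ^ r) *ᵥ x) := by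
      apply qf_ge hsymA heigA hexpA r x ((σD i₁ ^ 2) ^ r) {l | (i₁:ℕ) < (l:ℕ)}
        (fun l hl => (mem_kerGT.mp hx3) l hl)
      intro l hl
      have : (l:ℕ) ≤ (i₁:ℕ) := by simpa using hl
      have h1 : σD i₁ ≤ σD l := hmonoA (by simp [Fin.le_def, this])
      exact pow_le_pow_left₀ (sq_nonneg _) (pow_le_pow_left₀ (hnnA i₁) h1 2) r
    have hmid : x ⬝ᵥ (B *ᵥ x) = x ⬝ᵥ ((A ^ r) *ᵥ x) := by
      rw [hQB x, hS2zero x hx2, dotProduct_zero, add_zero]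
    have hfin : (σD i₁ ^ 2) ^ r * (x ⬝ᵥ x) ≤ σDr j ^ 2 * (x ⬝ᵥ x) :=
      le_trans hhigh (le_trans (le_of_eq hmid.symm) hlow)
    exact le_of_mul_le_mul_right hfin (dot_self_pos hxne)
  -- edge cases
  have hwB_self : ∀ l : Fin m, wB l ⬝ᵥ wB l = 1 := by
    intro l; rw [horthB l l, if_pos rfl]
  have edge_up : σDr j ^ 2 ≤ (σD ⟨0, hm0⟩ ^ 2) ^ r := by
    have h0j : σDr j ≤ σDr ⟨0, hm0⟩ := hmonoB (by simp [Fin.le_def])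
    have h1 : σDr j ^ 2 ≤ σDr ⟨0, hm0⟩ ^ 2 := pow_le_pow_left₀ (hnnB j) h0j 2
    have h2 : σDr ⟨0, hm0⟩ ^ 2 = wB ⟨0, hm0⟩ ⬝ᵥ (B *ᵥ wB ⟨0, hm0⟩) := by
      rw [heigB ⟨0, hm0⟩, dotProduct_smul, hwB_self, smul_eq_mul, mul_one]
    have h3 : wB ⟨0, hm0⟩ ⬝ᵥ (B *ᵥ wB ⟨0, hm0⟩) ≤ (σD ⟨0, hm0⟩ ^ 2) ^ r := by
      rw [hB, normMsq]
      calc (D ^ r *ᵥ wB ⟨0, hm0⟩) ⬝ᵥ (D ^ r *ᵥ wB ⟨0, hm0⟩)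
          ≤ (σD ⟨0, hm0⟩ ^ 2) ^ r * (wB ⟨0, hm0⟩ ⬝ᵥ wB ⟨0, hm0⟩) := key_up r _
        _ = (σD ⟨0, hm0⟩ ^ 2) ^ r := by rw [hwB_self, mul_one]
    calc σDr j ^ 2 ≤ σDr ⟨0, hm0⟩ ^ 2 := h1
      _ = wB ⟨0, hm0⟩ ⬝ᵥ (B *ᵥ wB ⟨0, hm0⟩) := h2
      _ ≤ (σD ⟨0, hm0⟩ ^ 2) ^ r := h3
  have edge_lo : (σD ⟨m-1, hm1⟩ ^ 2) ^ r ≤ σDr j ^ 2 := by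
    have h0j : σDr ⟨m-1, hm1⟩ ≤ σDr j := hmonoB (by simp [Fin.le_def]; omega)
    have h1 : σDr ⟨m-1, hm1⟩ ^ 2 ≤ σDr j ^ 2 := pow_le_pow_left₀ (hnnB _) h0j 2
    have h2 : σDr ⟨m-1, hm1⟩ ^ 2 = wB ⟨m-1, hm1⟩ ⬝ᵥ (B *ᵥ wB ⟨m-1, hm1⟩) := by
      rw [heigB ⟨m-1, hm1⟩, dotProduct_smul, hwB_self, smul_eq_mul, mul_one]
    have h3 : (σD ⟨m-1, hm1⟩ ^ 2) ^ r ≤ wB ⟨m-1, hm1⟩ ⬝ᵥ (B *ᵥ wB ⟨m-1, hm1⟩) := by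
      rw [hB, normMsq]
      calc (σD ⟨m-1, hm1⟩ ^ 2) ^ r
          = (σD ⟨m-1, hm1⟩ ^ 2) ^ r * (wB ⟨m-1, hm1⟩ ⬝ᵥ wB ⟨m-1, hm1⟩) := by
            rw [hwB_self, mul_one]
        _ ≤ (D ^ r *ᵥ wB ⟨m-1, hm1⟩) ⬝ᵥ (D ^ r *ᵥ wB ⟨m-1, hm1⟩) := key_lo r _
    calc (σD ⟨m-1, hm1⟩ ^ 2) ^ r ≤ wB ⟨m-1, hm1⟩ ⬝ᵥ (B *ᵥ wB ⟨m-1, hm1⟩) := h3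
      _ = σDr ⟨m-1, hm1⟩ ^ 2 := h2.symm
      _ ≤ σDr j ^ 2 := h1
  -- conversion from squares
  have conv_le : ∀ i : Fin m, σDr j ^ 2 ≤ (σD i ^ 2) ^ r → σDr j ≤ σD i ^ r := by
    intro i h
    apply le_of_sq_le_sq' (pow_nonneg (hnnA i) r)
    calc σDr j ^ 2 ≤ (σD i ^ 2) ^ r := h
      _ = (σD i ^ r) ^ 2 := by rw [← pow_mul, ← pow_mul, mul_comm]
  have conv_ge : ∀ i : Fin m, (σD i ^ 2) ^ r ≤ σDr j ^ 2 → σD i ^ r ≤ σDr j := by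
    intro i h
    apply le_of_sq_le_sq' (hnnB j)
    calc (σD i ^ r) ^ 2 = (σD i ^ 2) ^ r := by rw [← pow_mul, ← pow_mul, mul_comm]
      _ ≤ σDr j ^ 2 := h
  constructor
  · -- lower bound
    by_cases hcase : (j:ℕ) + 2*r ≤ m - 1
    · have hidx : (⟨min ((j:ℕ) + 2*r) (m-1), by omega⟩ : Fin m)
          = ⟨(j:ℕ) + 2*r, by omega⟩ := by
        apply Fin.ext; simp; omega
      rw [hidx]
      exact conv_ge _ (main_lo ⟨(j:ℕ) + 2*r, by omega⟩ (by simp))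
    · have hidx : (⟨min ((j:ℕ) + 2*r) (m-1), by omega⟩ : Fin m) = ⟨m-1, hm1⟩ := by
        apply Fin.ext; simp; omega
      rw [hidx]
      exact conv_ge _ edge_lo
  · -- upper bound
    by_cases hcase : 2*r ≤ (j:ℕ)
    · exact conv_le _ (main_up ⟨(j:ℕ) - 2*r, by omega⟩ (by simp; omega))
    · have hidx : (⟨(j:ℕ) - 2*r, by omega⟩ : Fin m) = ⟨0, hm0⟩ := by
        apply Fin.ext; simp; omega
      rw [hidx]
      exact conv_le _ edge_up
end

section
/- Let ξ = (ξ_1, …, ξ_m) with ξ_j ~ N(0, 1/m) i.i.d., and let s_1, …, s_m be positive reals. Then for any γ > 0 and any integer 1 ≤ L ≤ m, P( Σ_{j=1}^m s_j² ξ_j² < γ ) ≤ (e γ m / L)^{L/2} (s_1 s_2 ⋯ s_L)^{−1}. -/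
open MeasureTheory ProbabilityTheory Real Finset

open scoped ENNReal NNReal

lemma lintegral_pi_prod : ∀ {n : ℕ} (μ : Fin n → Measure ℝ) [∀ i, SigmaFinite (μ i)]
    (f : Fin n → ℝ → ℝ≥0∞) (_hf : ∀ i, Measurable (f i)),
    ∫⁻ x : Fin n → ℝ, ∏ i, f i (x i) ∂(Measure.pi μ) = ∏ i, ∫⁻ x, f i x ∂(μ i) := by
  intro n
  induction n with
  | zero => intro μ _ f hf; simp
  | succ n ih =>
      intro μ _ f hf
      rw [← ((measurePreserving_piFinSuccAbove μ 0).symm).lintegral_comp_emb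
        (MeasurableEquiv.measurableEmbedding _)]
      simp_rw [MeasurableEquiv.piFinSuccAbove_symm_apply, Fin.insertNthEquiv,
        Fin.prod_univ_succ, Fin.insertNth_zero, Equiv.coe_fn_mk,
        Fin.zero_succAbove, Fin.cons_zero, Fin.cons_succ, cast_eq]
      have h2 : Measurable fun y : Fin n → ℝ => ∏ i, f i.succ (y i) :=
        Finset.measurable_prod _ (fun i _ => (hf _).comp (measurable_pi_apply i))
      have := MeasureTheory.lintegral_prod_mul (μ := μ 0)
        (ν := Measure.pi fun j : Fin n => μ j.succ)
        (hf 0).aemeasurable h2.aemeasurable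
      rw [this, ih _ _ (fun i => hf _)]

lemma lintegral_exp_neg_mul_sq_gaussian (v : ℝ≥0) (hv : v ≠ 0) (c : ℝ) (hc : 0 ≤ c) :
    ∫⁻ x, ENNReal.ofReal (rexp (-c * x ^ 2)) ∂(gaussianReal 0 v)
      = ENNReal.ofReal (Real.sqrt (1 + 2 * c * v))⁻¹ := by
  have hvr : (0:ℝ) < (v:ℝ) := by positivity
  have hb : (0:ℝ) < c + ((2:ℝ) * v)⁻¹ := by positivity
  set b : ℝ := c + ((2:ℝ) * v)⁻¹ with hbdef
  rw [gaussianReal_of_var_ne_zero 0 hv,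
    lintegral_withDensity_eq_lintegral_mul _ (measurable_gaussianPDF 0 v)
      (by measurability)]
  have key : ∀ x : ℝ, gaussianPDF 0 v x * ENNReal.ofReal (rexp (-c * x ^ 2))
      = ENNReal.ofReal ((Real.sqrt (2 * π * v))⁻¹ * rexp (-b * x ^ 2)) := by
    intro x
    rw [gaussianPDF, ← ENNReal.ofReal_mul (gaussianPDFReal_nonneg _ _ _)]
    congr 1
    rw [gaussianPDFReal]
    rw [mul_assoc, ← Real.exp_add]
    congr 2
    field_simp [hvr.ne']
    linear_combination x ^ 2 * mul_inv_cancel₀ hvr.ne'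
  simp_rw [Pi.mul_apply, key]
  rw [← ofReal_integral_eq_lintegral_ofReal
    (((integrable_exp_neg_mul_sq hb).const_mul _))
    (Filter.Eventually.of_forall fun x => by positivity)]
  rw [integral_const_mul, integral_gaussian]
  congr 1
  rw [← Real.sqrt_inv, ← Real.sqrt_inv, ← Real.sqrt_mul (by positivity)]
  congr 1
  rw [hbdef]
  field_simp
  ring

/-- Lower tail bound: if `ξ_j ~ N(0, 1/m)` i.i.d. and `s_j > 0`, then for any `γ > 0`
and any integer `1 ≤ L ≤ m`,
`P(Σ s_j² ξ_j² < γ) ≤ (e γ m / L)^{L/2} (s_1 ⋯ s_L)⁻¹`. -/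
theorem weighted_chi_square_lower_tail (m : ℕ) (hm : 0 < m)
    (s : Fin m → ℝ) (hs : ∀ j, 0 < s j) (γ : ℝ) (hγ : 0 < γ)
    (L : ℕ) (hL1 : 1 ≤ L) (hLm : L ≤ m) :
    (Measure.pi fun _ : Fin m => gaussianReal 0 (m : NNReal)⁻¹)
      {ξ : Fin m → ℝ | ∑ j, (s j) ^ 2 * (ξ j) ^ 2 < γ}
    ≤ ENNReal.ofReal
        ((Real.exp 1 * γ * m / L) ^ ((L : ℝ) / 2) *
          (∏ j ∈ Finset.univ.filter fun j : Fin m => (j : ℕ) < L, s j)⁻¹) := by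
  have hmR : (0:ℝ) < m := by exact_mod_cast hm
  have hLR : (0:ℝ) < L := by exact_mod_cast hL1
  set v : ℝ≥0 := (m : NNReal)⁻¹ with hvdef
  have hv : v ≠ 0 := by
    rw [hvdef, ne_eq, inv_eq_zero]
    simpa using hm.ne'
  have hvR : (v : ℝ) = (m : ℝ)⁻¹ := by
    simp [hvdef]
  set t : ℝ := L / γ with htdef
  have ht : 0 < t := by positivity
  set S : Finset (Fin m) := Finset.univ.filter fun j : Fin m => (j : ℕ) < L with hSdef
  have hcard : S.card = L := by
    have : S = Finset.attachFin (Finset.range L)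
        (fun x hx => lt_of_lt_of_le (Finset.mem_range.mp hx) hLm) := by
      ext j; simp [hSdef]
    rw [this, Finset.card_attachFin, Finset.card_range]
  set g : Fin m → ℝ → ℝ≥0∞ := fun j x =>
    if (j : ℕ) < L then ENNReal.ofReal (rexp (-(t/2 * s j ^ 2) * x ^ 2)) else 1 with hgdef
  have hgmeas : ∀ j, Measurable (g j) := by
    intro j
    by_cases h : (j : ℕ) < L
    · simp only [hgdef, if_pos h]
      exact ENNReal.measurable_ofReal.comp
        (Real.continuous_exp.comp (by continuity)).measurable
    · simp only [hgdef, if_neg h]; exact measurable_const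
  set F : (Fin m → ℝ) → ℝ≥0∞ := fun ξ => ∏ j, g j (ξ j) with hFdef
  have hFmeas : Measurable F :=
    Finset.measurable_prod _ fun j _ => (hgmeas j).comp (measurable_pi_apply j)
  have hFeq : ∀ ξ : Fin m → ℝ,
      F ξ = ENNReal.ofReal (rexp (-(t/2) * ∑ j ∈ S, s j ^ 2 * ξ j ^ 2)) := by
    intro ξ
    have : F ξ = ∏ j ∈ S, ENNReal.ofReal (rexp (-(t/2 * s j ^ 2) * ξ j ^ 2)) := by
      rw [hFdef, hSdef, Finset.prod_filter]
    rw [this, ← ENNReal.ofReal_prod_of_nonneg (fun i _ => (Real.exp_pos _).le),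
      ← Real.exp_sum]
    congr 2
    rw [Finset.mul_sum]
    exact Finset.sum_congr rfl fun j _ => by ring
  set ε : ℝ≥0∞ := ENNReal.ofReal (rexp (-(t/2) * γ)) with hεdef
  have hε0 : ε ≠ 0 := by
    simp only [hεdef, ne_eq, ENNReal.ofReal_eq_zero, not_le]
    exact Real.exp_pos _
  set μ : Measure (Fin m → ℝ) := Measure.pi fun _ : Fin m => gaussianReal 0 v with hμdef
  -- Step A: event is contained in {ε ≤ F}
  have hsub : {ξ : Fin m → ℝ | ∑ j, (s j) ^ 2 * (ξ j) ^ 2 < γ} ⊆ {ξ | ε ≤ F ξ} := by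
    intro ξ hξ
    simp only [Set.mem_setOf_eq] at hξ ⊢
    rw [hFeq ξ, hεdef]
    apply ENNReal.ofReal_le_ofReal
    apply Real.exp_le_exp.mpr
    have hsum : ∑ j ∈ S, s j ^ 2 * ξ j ^ 2 ≤ ∑ j, s j ^ 2 * ξ j ^ 2 := by
      apply Finset.sum_le_sum_of_subset_of_nonneg (Finset.filter_subset _ _)
      intro j _ _; positivity
    nlinarith [hsum, hξ, ht]
  -- Step B: Markov
  have hmarkov : μ {ξ : Fin m → ℝ | ∑ j, (s j) ^ 2 * (ξ j) ^ 2 < γ}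
      ≤ ε⁻¹ * ∫⁻ ξ, F ξ ∂μ := by
    calc μ {ξ : Fin m → ℝ | ∑ j, (s j) ^ 2 * (ξ j) ^ 2 < γ}
        ≤ μ {ξ | ε ≤ F ξ} := measure_mono hsub
      _ = ε⁻¹ * (ε * μ {ξ | ε ≤ F ξ}) := by
          rw [← mul_assoc, ENNReal.inv_mul_cancel hε0 ENNReal.ofReal_ne_top, one_mul]
      _ ≤ ε⁻¹ * ∫⁻ ξ, F ξ ∂μ :=
          mul_le_mul_right (mul_meas_ge_le_lintegral₀ hFmeas.aemeasurable ε) _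
  -- Step C: compute the integral
  have hint : ∫⁻ ξ, F ξ ∂μ
      = ∏ j ∈ S, ENNReal.ofReal (Real.sqrt (1 + 2 * (t/2 * s j ^ 2) * v))⁻¹ := by
    rw [hμdef, hFdef, lintegral_pi_prod _ g hgmeas, hSdef, Finset.prod_filter]
    apply Finset.prod_congr rfl
    intro j _
    by_cases h : (j : ℕ) < L
    · simp only [hgdef, if_pos h]
      exact lintegral_exp_neg_mul_sq_gaussian v hv _ (by positivity)
    · simp only [hgdef, if_neg h]
      simp
  -- Step D: final bound
  refine le_trans hmarkov ?_
  rw [hint]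
  have hεinv : ε⁻¹ = ENNReal.ofReal (rexp ((t/2) * γ)) := by
    rw [hεdef, ← ENNReal.ofReal_inv_of_pos (Real.exp_pos _), ← Real.exp_neg]
    ring_nf
  rw [hεinv, ← ENNReal.ofReal_prod_of_nonneg (fun i _ => by positivity),
    ← ENNReal.ofReal_mul (Real.exp_pos _).le]
  apply ENNReal.ofReal_le_ofReal
  -- now a purely real inequality
  have hAineq : ∀ j ∈ S, (Real.sqrt (1 + 2 * (t/2 * s j ^ 2) * v))⁻¹
      ≤ Real.sqrt ((m : ℝ) / t) * (s j)⁻¹ := by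
    intro j _
    have hsj := hs j
    have h1 : t * s j ^ 2 / m ≤ 1 + 2 * (t/2 * s j ^ 2) * v := by
      rw [hvR]
      have : 2 * (t/2 * s j ^ 2) * (m:ℝ)⁻¹ = t * s j ^ 2 / m := by field_simp
      rw [this]; linarith
    have h2 : Real.sqrt (t * s j ^ 2 / m) ≤ Real.sqrt (1 + 2 * (t/2 * s j ^ 2) * v) :=
      Real.sqrt_le_sqrt h1
    have h3 : (0:ℝ) < Real.sqrt (t * s j ^ 2 / m) := Real.sqrt_pos.mpr (by positivity)
    have h4 := inv_anti₀ h3 h2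
    refine le_trans h4 (le_of_eq ?_)
    have h5 : t * s j ^ 2 / m = s j ^ 2 * (t / m) := by ring
    rw [h5, Real.sqrt_mul (sq_nonneg _), Real.sqrt_sq hsj.le, mul_inv,
      ← Real.sqrt_inv, inv_div, mul_comm]
  have hprodle : ∏ j ∈ S, (Real.sqrt (1 + 2 * (t/2 * s j ^ 2) * v))⁻¹
      ≤ ∏ j ∈ S, (Real.sqrt ((m : ℝ) / t) * (s j)⁻¹) := by
    apply Finset.prod_le_prod (fun j _ => by positivity) hAineq
  have hexp : rexp ((t/2) * γ) = Real.exp 1 ^ ((L : ℝ) / 2) := by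
    rw [Real.exp_one_rpow]
    congr 1
    rw [htdef]
    field_simp
  have hprodeq : ∏ j ∈ S, (Real.sqrt ((m : ℝ) / t) * (s j)⁻¹)
      = ((m : ℝ) / t) ^ ((L : ℝ) / 2) * (∏ j ∈ S, s j)⁻¹ := by
    rw [Finset.prod_mul_distrib, Finset.prod_const, hcard, Finset.prod_inv_distrib]
    congr 1
    rw [Real.sqrt_eq_rpow, ← Real.rpow_natCast (((m:ℝ)/t) ^ ((1:ℝ)/2)) L,
      ← Real.rpow_mul (by positivity)]
    congr 1
    ring
  calc rexp ((t/2) * γ) * ∏ j ∈ S, (Real.sqrt (1 + 2 * (t/2 * s j ^ 2) * v))⁻¹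
      ≤ rexp ((t/2) * γ) * ∏ j ∈ S, (Real.sqrt ((m : ℝ) / t) * (s j)⁻¹) := by
        apply mul_le_mul_of_nonneg_left hprodle (Real.exp_pos _).le
    _ = (Real.exp 1 * γ * m / L) ^ ((L : ℝ) / 2) * (∏ j ∈ S, s j)⁻¹ := by
        rw [hexp, hprodeq, ← mul_assoc, ← Real.mul_rpow (Real.exp_pos _).le (by positivity)]
        congr 2
        rw [htdef]
        field_simp
end

section
/- Let x, x' ∈ R^N with ‖x − x'‖₂ ≤ η, let T = supp(x) with |T| = k, and for k ≤ k' ≤ N−1 let T' be the support of (any of) the k' largest-magnitude entries of x'. Then ‖x restricted to T\T'‖₂ ≤ β η where β ≤ (1 + k/k')^{1/2}. -/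
open Finset

/-- Minkowski-type: √∑(y+z)² ≤ √∑y² + √∑z². -/
lemma my_minkowski {ι : Type*} (s : Finset ι) (y z : ι → ℝ) :
    Real.sqrt (∑ i ∈ s, (y i + z i) ^ 2) ≤
      Real.sqrt (∑ i ∈ s, (y i) ^ 2) + Real.sqrt (∑ i ∈ s, (z i) ^ 2) := by
  have hy : (0:ℝ) ≤ ∑ i ∈ s, (y i) ^ 2 := Finset.sum_nonneg fun i _ => sq_nonneg _
  have hz : (0:ℝ) ≤ ∑ i ∈ s, (z i) ^ 2 := Finset.sum_nonneg fun i _ => sq_nonneg _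
  have hcs := Real.sum_mul_le_sqrt_mul_sqrt s y z
  rw [show (Real.sqrt (∑ i ∈ s, (y i) ^ 2) + Real.sqrt (∑ i ∈ s, (z i) ^ 2)) =
      Real.sqrt ((Real.sqrt (∑ i ∈ s, (y i) ^ 2) + Real.sqrt (∑ i ∈ s, (z i) ^ 2)) ^ 2) from
      (Real.sqrt_sq (by positivity)).symm]
  apply Real.sqrt_le_sqrt
  have h1 : Real.sqrt (∑ i ∈ s, (y i) ^ 2) ^ 2 = ∑ i ∈ s, (y i) ^ 2 := Real.sq_sqrt hy
  have h2 : Real.sqrt (∑ i ∈ s, (z i) ^ 2) ^ 2 = ∑ i ∈ s, (z i) ^ 2 := Real.sq_sqrt hz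
  have hexp : ∑ i ∈ s, (y i + z i) ^ 2
      = ∑ i ∈ s, (y i) ^ 2 + 2 * (∑ i ∈ s, y i * z i) + ∑ i ∈ s, (z i) ^ 2 := by
    rw [Finset.mul_sum, ← Finset.sum_add_distrib, ← Finset.sum_add_distrib]
    exact Finset.sum_congr rfl fun i _ => by ring
  nlinarith [hcs]

lemma my_combine (A B cc q : ℝ) (hA : 0 ≤ A) (hB : 0 ≤ B) (hcc : 0 ≤ cc)
    (hq : cc ^ 2 = q) : A + cc * B ≤ Real.sqrt (1 + q) * Real.sqrt (A ^ 2 + B ^ 2) := by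
  have hq0 : 0 ≤ q := hq ▸ sq_nonneg cc
  have key : A + cc * B ≤ Real.sqrt ((1 + q) * (A ^ 2 + B ^ 2)) := by
    rw [Real.le_sqrt (by positivity) (by positivity), ← hq]
    nlinarith [sq_nonneg (cc * A - B)]
  rwa [Real.sqrt_mul (by positivity)] at key

set_option maxHeartbeats 1000000 in
/-- If `‖x − x'‖₂ ≤ η`, `T = supp(x)` with `|T| = k`, and `T'` is the index set of (any of)
the `k'` largest-magnitude entries of `x'` for `k ≤ k' ≤ N − 1`, then
`‖x_{T \ T'}‖₂ ≤ (1 + k/k')^{1/2} η`. -/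
theorem support_recovery_missed_energy (N k k' : ℕ) (x x' : Fin N → ℝ) (η : ℝ) (hη : 0 ≤ η)
    (hdist : Real.sqrt (∑ j, (x j - x' j) ^ 2) ≤ η)
    (T : Finset (Fin N)) (hT : T = Finset.univ.filter fun j => x j ≠ 0) (hk : T.card = k)
    (hkk' : k ≤ k') (hk'N : k' ≤ N - 1)
    (T' : Finset (Fin N)) (hT'card : T'.card = k')
    (hT' : ∀ i ∈ T', ∀ j ∉ T', |x' j| ≤ |x' i|) :
    Real.sqrt (∑ j ∈ T \ T', (x j) ^ 2) ≤ Real.sqrt (1 + (k : ℝ) / k') * η := by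
  have hRHS0 : 0 ≤ Real.sqrt (1 + (k : ℝ) / k') * η := mul_nonneg (Real.sqrt_nonneg _) hη
  by_cases hempty : T \ T' = ∅
  · simp [hempty, hRHS0]
  have hne : (T \ T').Nonempty := Finset.nonempty_of_ne_empty hempty
  set a := (T \ T').card with ha
  set b := (T' \ T).card with hb
  set c := (T ∩ T').card with hc
  have hac : a + c = k := by rw [ha, hc, ← hk]; exact Finset.card_sdiff_add_card_inter _ _
  have hbc : b + c = k' := by
    rw [hb, hc, Finset.inter_comm, ← hT'card]; exact Finset.card_sdiff_add_card_inter _ _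
  have ha1 : 1 ≤ a := Finset.card_pos.2 hne
  have hab : a ≤ b := by omega
  have hb1 : 1 ≤ b := le_trans ha1 hab
  have hk'1 : 1 ≤ k' := by omega
  have hcard : a * k' ≤ k * b := by
    have h : a * (b + c) ≤ (a + c) * b := by nlinarith
    rw [hbc, hac] at h; exact h
  have hx0 : ∀ i ∈ T' \ T, x i = 0 := by
    intro i hi
    have hiT : i ∉ T := (Finset.mem_sdiff.1 hi).2
    rw [hT] at hiT; simpa using hiT
  set S1 := ∑ j ∈ T \ T', (x' j) ^ 2 with hS1
  set S2 := ∑ i ∈ T' \ T, (x' i) ^ 2 with hS2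
  have hS1nn : 0 ≤ S1 := Finset.sum_nonneg fun i _ => sq_nonneg _
  have hS2nn : 0 ≤ S2 := Finset.sum_nonneg fun i _ => sq_nonneg _
  have hbpos : (0:ℝ) < b := by exact_mod_cast hb1
  have hk'pos : (0:ℝ) < (k' : ℝ) := by exact_mod_cast hk'1
  have hcard' : (a : ℝ) * k' ≤ (k : ℝ) * b := by exact_mod_cast hcard
  -- b * S1 ≤ a * S2 via double sum
  have hdouble : (b : ℝ) * S1 ≤ (a : ℝ) * S2 := by
    have key : ∀ i ∈ T' \ T, ∀ j ∈ T \ T', (x' j) ^ 2 ≤ (x' i) ^ 2 := by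
      intro i hi j hj
      have hiT' : i ∈ T' := (Finset.mem_sdiff.1 hi).1
      have hjT' : j ∉ T' := (Finset.mem_sdiff.1 hj).2
      have habs := hT' i hiT' j hjT'
      have h1 := abs_nonneg (x' j)
      calc (x' j) ^ 2 = |x' j| ^ 2 := (sq_abs _).symm
        _ ≤ |x' i| ^ 2 := by nlinarith
        _ = (x' i) ^ 2 := sq_abs _
    calc (b : ℝ) * S1 = ∑ i ∈ T' \ T, ∑ j ∈ T \ T', (x' j) ^ 2 := by
          rw [Finset.sum_const, nsmul_eq_mul, hb]
      _ ≤ ∑ i ∈ T' \ T, ∑ j ∈ T \ T', (x' i) ^ 2 :=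
          Finset.sum_le_sum fun i hi => Finset.sum_le_sum fun j hj => key i hi j hj
      _ = ∑ i ∈ T' \ T, (a : ℝ) * (x' i) ^ 2 :=
          Finset.sum_congr rfl fun i _ => by rw [Finset.sum_const, nsmul_eq_mul, ha]
      _ = (a : ℝ) * S2 := by rw [← Finset.mul_sum]
  have hS1le : S1 ≤ (k : ℝ) / k' * S2 := by
    rw [div_mul_eq_mul_div, le_div_iff₀ hk'pos]
    nlinarith [mul_le_mul_of_nonneg_right hdouble hk'pos.le,
      mul_le_mul_of_nonneg_right hcard' hS2nn]
  -- define A and B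
  set A := Real.sqrt (∑ j ∈ T \ T', (x j - x' j) ^ 2) with hA
  set B := Real.sqrt (∑ i ∈ T' \ T, (x i - x' i) ^ 2) with hB
  have hAnn : 0 ≤ A := Real.sqrt_nonneg _
  have hBnn : 0 ≤ B := Real.sqrt_nonneg _
  have hA2 : A ^ 2 = ∑ j ∈ T \ T', (x j - x' j) ^ 2 :=
    Real.sq_sqrt (Finset.sum_nonneg fun i _ => sq_nonneg _)
  have hB2 : B ^ 2 = S2 := by
    rw [hB, Real.sq_sqrt (Finset.sum_nonneg fun i _ => sq_nonneg _), hS2]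
    exact Finset.sum_congr rfl fun i hi => by rw [hx0 i hi]; ring
  have hB2' : B ^ 2 = ∑ i ∈ T' \ T, (x i - x' i) ^ 2 :=
    Real.sq_sqrt (Finset.sum_nonneg fun i _ => sq_nonneg _)
  have hsqS2 : Real.sqrt S2 = B := by rw [← hB2, Real.sqrt_sq hBnn]
  have hsub : A ^ 2 + B ^ 2 ≤ ∑ j, (x j - x' j) ^ 2 := by
    have hdisj : Disjoint (T \ T') (T' \ T) := disjoint_sdiff_sdiff
    rw [hA2, hB2', ← Finset.sum_union hdisj]
    exact Finset.sum_le_sum_of_subset_of_nonneg (Finset.subset_univ _)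
      (fun i _ _ => sq_nonneg _)
  -- Step 1 : Minkowski
  have step1 : Real.sqrt (∑ j ∈ T \ T', (x j) ^ 2) ≤ A + Real.sqrt S1 := by
    have := my_minkowski (T \ T') (fun j => x j - x' j) x'
    simpa using this
  -- Step 2 : sqrt S1 ≤ sqrt(k/k') * B
  set cc := Real.sqrt ((k : ℝ) / k') with hcc
  have hccnn : 0 ≤ cc := Real.sqrt_nonneg _
  have hcc2 : cc ^ 2 = (k : ℝ) / k' := Real.sq_sqrt (by positivity)
  have step2 : Real.sqrt S1 ≤ cc * B := by
    calc Real.sqrt S1 ≤ Real.sqrt ((k : ℝ) / k' * S2) := Real.sqrt_le_sqrt hS1le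
      _ = cc * Real.sqrt S2 := Real.sqrt_mul (by positivity) _
      _ = cc * B := by rw [hsqS2]
  clear_value A B cc S1 S2
  -- Step 3 : A + cc*B ≤ sqrt(1+k/k') * sqrt(A²+B²)
  have step3 : A + cc * B ≤ Real.sqrt (1 + (k : ℝ) / k') * Real.sqrt (A ^ 2 + B ^ 2) :=
    my_combine A B cc _ hAnn hBnn hccnn hcc2
  -- Step 4 : sqrt(A²+B²) ≤ η
  have step4 : Real.sqrt (A ^ 2 + B ^ 2) ≤ η := by
    calc Real.sqrt (A ^ 2 + B ^ 2) ≤ Real.sqrt (∑ j, (x j - x' j) ^ 2) :=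
          Real.sqrt_le_sqrt hsub
      _ ≤ η := hdist
  calc Real.sqrt (∑ j ∈ T \ T', (x j) ^ 2) ≤ A + Real.sqrt S1 := step1
    _ ≤ A + cc * B := by linarith
    _ ≤ Real.sqrt (1 + (k : ℝ) / k') * Real.sqrt (A ^ 2 + B ^ 2) := step3
    _ ≤ Real.sqrt (1 + (k : ℝ) / k') * η :=
        mul_le_mul_of_nonneg_left step4 (Real.sqrt_nonneg _)
end

section
/- Let x, x' ∈ R^N with ‖x − x'‖₂ ≤ η, T = supp(x), |T| = k, and k ≤ k' ≤ N−1. If |x_j| > γη for all j ∈ T, where γ = (1 + 1/(k'−k+1))^{1/2}, then the support T' of the k' largest-magnitude entries of x' contains T. -/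
open Finset

/-- If `‖x − x'‖₂ ≤ η`, `T = supp(x)` with `|T| = k`, `k ≤ k' ≤ N − 1`, and
`|x_j| > γη` for all `j ∈ T` where `γ = (1 + 1/(k'−k+1))^{1/2}`, then the index set `T'`
of the `k'` largest-magnitude entries of `x'` contains `T`. -/
theorem support_recovery_inclusion (N k k' : ℕ) (x x' : Fin N → ℝ) (η : ℝ) (hη : 0 ≤ η)
    (hdist : Real.sqrt (∑ j, (x j - x' j) ^ 2) ≤ η)
    (T : Finset (Fin N)) (hT : T = Finset.univ.filter fun j => x j ≠ 0) (hk : T.card = k)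
    (hkk' : k ≤ k') (hk'N : k' ≤ N - 1)
    (hbig : ∀ j ∈ T, Real.sqrt (1 + 1 / ((k' : ℝ) - k + 1)) * η < |x j|)
    (T' : Finset (Fin N)) (hT'card : T'.card = k')
    (hT' : ∀ i ∈ T', ∀ j ∉ T', |x' j| ≤ |x' i|) :
    T ⊆ T' := by
  intro j hj
  by_contra hjT'
  have hk1 : 1 ≤ k := hk ▸ Finset.card_pos.mpr ⟨j, hj⟩
  set S := T' \ T with hS
  -- cardinality of S is at least k' - k + 1
  have h1 : T' ∩ T ⊆ T.erase j := by
    intro i hi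
    rcases Finset.mem_inter.mp hi with ⟨hi1, hi2⟩
    exact Finset.mem_erase.mpr ⟨by rintro rfl; exact hjT' hi1, hi2⟩
  have h2 : (T' ∩ T).card ≤ k - 1 := by
    have := Finset.card_le_card h1
    rwa [Finset.card_erase_of_mem hj, hk] at this
  have h3 : S.card + (T' ∩ T).card = k' := by
    rw [hS, Finset.card_sdiff_add_card_inter, hT'card]
  have hScard : k' - k + 1 ≤ S.card := by omega
  set m : ℝ := (k' : ℝ) - k + 1 with hm
  have hm1 : 1 ≤ m := by
    have : (k : ℝ) ≤ (k' : ℝ) := Nat.cast_le.mpr hkk'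
    simp [hm]; linarith
  have hm0 : 0 < m := by linarith
  have hmS : m ≤ (S.card : ℝ) := by
    have := (Nat.cast_le (α := ℝ)).mpr hScard
    push_cast [Nat.cast_sub hkk'] at this
    linarith
  -- sum bound
  have hnn : 0 ≤ ∑ i, (x i - x' i) ^ 2 := Finset.sum_nonneg fun i _ => sq_nonneg _
  have hsum : ∑ i, (x i - x' i) ^ 2 ≤ η ^ 2 := by
    nlinarith [Real.sq_sqrt hnn, Real.sqrt_nonneg (∑ i, (x i - x' i) ^ 2)]
  have hjS : j ∉ S := fun h => (Finset.mem_sdiff.mp h).2 hj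
  have hsplit : (x j - x' j) ^ 2 + ∑ i ∈ S, (x i - x' i) ^ 2 ≤ η ^ 2 := by
    calc (x j - x' j) ^ 2 + ∑ i ∈ S, (x i - x' i) ^ 2
        = ∑ i ∈ insert j S, (x i - x' i) ^ 2 := (Finset.sum_insert (f := fun i => (x i - x' i) ^ 2) hjS).symm
      _ ≤ ∑ i, (x i - x' i) ^ 2 :=
          Finset.sum_le_sum_of_subset_of_nonneg (Finset.subset_univ _)
            (fun i _ _ => sq_nonneg _)
      _ ≤ η ^ 2 := hsum
  have hterm : ∀ i ∈ S, (x' j) ^ 2 ≤ (x i - x' i) ^ 2 := by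
    intro i hi
    rcases Finset.mem_sdiff.mp hi with ⟨hi1, hi2⟩
    have hx0 : x i = 0 := by
      rw [hT] at hi2
      simpa using hi2
    have hle : |x' j| ≤ |x' i| := hT' i hi1 j hjT'
    rw [hx0]
    nlinarith [sq_abs (x' j), sq_abs (x' i), abs_nonneg (x' j)]
  have hsumS : (S.card : ℝ) * (x' j) ^ 2 ≤ ∑ i ∈ S, (x i - x' i) ^ 2 := by
    have := Finset.card_nsmul_le_sum S _ _ hterm
    simpa [nsmul_eq_mul] using this
  have hq : (x j - x' j) ^ 2 + m * (x' j) ^ 2 ≤ η ^ 2 := by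
    nlinarith [sq_nonneg (x' j)]
  -- squared big-entry bound
  have hγ : Real.sqrt (1 + 1 / m) * η < |x j| := hbig j hj
  have hs0 : (0:ℝ) ≤ 1 + 1 / m := by positivity
  have hγ2 : (1 + 1 / m) * η ^ 2 < (x j) ^ 2 := by
    have h4 : (Real.sqrt (1 + 1 / m) * η) ^ 2 < |x j| ^ 2 :=
      pow_lt_pow_left₀ hγ (by positivity) two_ne_zero
    rw [mul_pow, Real.sq_sqrt hs0, sq_abs] at h4
    exact h4
  have hminv : m * (1 / m) = 1 := mul_one_div_cancel (ne_of_gt hm0)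
  nlinarith [sq_nonneg (x j - (m + 1) * x' j), mul_lt_mul_of_pos_left hγ2 hm0,
    sq_nonneg (x' j), sq_nonneg η]
end

section
/- Let E be a full-rank m×k real matrix (m ≥ k), r a positive integer, and D the m×m difference matrix. Among all left inverses F of E (k×m matrices with FE = I), the operator norm ‖F D^r‖_{ℓ₂→ℓ₂} is minimized by the Sobolev dual F_{sob,r} determined by F_{sob,r} D^r = (D^{−r} E)^†, where A^† = (A*A)^{−1}A* is the Moore–Penrose pseudoinverse. Moreover, the minimum value equals 1/σ_min(D^{−r}E). -/
open Matrix Real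

/-- Euclidean (ℓ₂) norm of a finite real vector. -/
noncomputable def e2norm {n : ℕ} (v : Fin n → ℝ) : ℝ :=
  Real.sqrt (∑ i, (v i) ^ 2)

/-- `ℓ₂ → ℓ₂` operator norm of a rectangular real matrix. -/
noncomputable def opNorm2 {a b : ℕ} (M : Matrix (Fin a) (Fin b) ℝ) : ℝ :=
  sSup {y | ∃ x : Fin b → ℝ, e2norm x ≤ 1 ∧ y = e2norm (M.mulVec x)}

/-- Smallest singular value of a rectangular real matrix. -/
noncomputable def sigmaMin {a b : ℕ} (M : Matrix (Fin a) (Fin b) ℝ) : ℝ :=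
  Real.sqrt (⨅ i, (show (Mᵀ * M).IsHermitian by
    rw [← Matrix.conjTranspose_eq_transpose_of_trivial]
    exact Matrix.isHermitian_conjTranspose_mul_self M).eigenvalues i)

theorem Matrix.isHermitian_transpose_mul_self {a b : ℕ} (M : Matrix (Fin a) (Fin b) ℝ) :
    (Mᵀ * M).IsHermitian := by
  rw [← Matrix.conjTranspose_eq_transpose_of_trivial]
  exact Matrix.isHermitian_conjTranspose_mul_self M

namespace SobolevAux

/-- The continuous linear map on Euclidean spaces induced by a matrix. -/
noncomputable def clm {a b : ℕ} (M : Matrix (Fin a) (Fin b) ℝ) :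
    EuclideanSpace ℝ (Fin b) →L[ℝ] EuclideanSpace ℝ (Fin a) :=
  LinearMap.toContinuousLinearMap (Matrix.toEuclideanLin M)

lemma clm_apply {a b : ℕ} (M : Matrix (Fin a) (Fin b) ℝ) (x : EuclideanSpace ℝ (Fin b)) :
    clm M x = (WithLp.equiv 2 (Fin a → ℝ)).symm (M.mulVec (WithLp.equiv 2 _ x)) := rfl

lemma e2norm_eq_norm {n : ℕ} (v : Fin n → ℝ) :
    e2norm v = ‖(WithLp.equiv 2 (Fin n → ℝ)).symm v‖ := by
  rw [EuclideanSpace.norm_eq]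
  simp [e2norm, Real.norm_eq_abs, sq_abs]

lemma opNorm2_eq {a b : ℕ} (M : Matrix (Fin a) (Fin b) ℝ) :
    opNorm2 M = ‖clm M‖ := by
  rw [← ContinuousLinearMap.sSup_unitClosedBall_eq_norm (clm M)]
  unfold opNorm2
  congr 1
  ext y
  simp only [Set.mem_setOf_eq, Set.mem_image]
  constructor
  · rintro ⟨x, hx, rfl⟩
    refine ⟨(WithLp.equiv 2 (Fin b → ℝ)).symm x, ?_, ?_⟩
    · rw [Metric.mem_closedBall, dist_zero_right, ← e2norm_eq_norm]
      exact hx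
    · rw [e2norm_eq_norm]; rfl
  · rintro ⟨x, hx, rfl⟩
    refine ⟨WithLp.equiv 2 (Fin b → ℝ) x, ?_, ?_⟩
    · rw [e2norm_eq_norm, Equiv.symm_apply_apply]
      exact mem_closedBall_zero_iff.mp hx
    · rw [e2norm_eq_norm]; rfl

lemma norm_sq_eq_dot {n : ℕ} (x : EuclideanSpace ℝ (Fin n)) :
    ‖x‖ ^ 2 = (WithLp.equiv 2 (Fin n → ℝ) x) ⬝ᵥ (WithLp.equiv 2 (Fin n → ℝ) x) := by
  rw [← real_inner_self_eq_norm_sq]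
  simp [PiLp.inner_apply, dotProduct, RCLike.inner_apply]
  rw [EuclideanSpace.norm_eq, Real.sq_sqrt (by positivity)]
  simp [Real.norm_eq_abs, sq_abs, sq]

lemma norm_eq_sqrt_dot {n : ℕ} (w : Fin n → ℝ) :
    ‖(WithLp.equiv 2 (Fin n → ℝ)).symm w‖ = Real.sqrt (w ⬝ᵥ w) := by
  rw [← Real.sqrt_sq (norm_nonneg _), norm_sq_eq_dot, Equiv.apply_symm_apply]

lemma dot_self_nonneg {n : ℕ} (v : Fin n → ℝ) : 0 ≤ v ⬝ᵥ v :=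
  dotProduct_star_self_nonneg v

/-- Rayleigh quotient lower bound for symmetric real matrices. -/
lemma rayleigh_le {n : ℕ} [NeZero n] {M : Matrix (Fin n) (Fin n) ℝ} (hM : M.IsHermitian)
    (x : Fin n → ℝ) :
    (⨅ i, hM.eigenvalues i) * (x ⬝ᵥ x) ≤ x ⬝ᵥ (M *ᵥ x) := by
  classical
  set U : Matrix (Fin n) (Fin n) ℝ := (hM.eigenvectorUnitary : Matrix (Fin n) (Fin n) ℝ) with hUdef
  have hU : U * Uᴴ = 1 := Matrix.mem_unitaryGroup_iff.mp hM.eigenvectorUnitary.2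
  set d : Fin n → ℝ := hM.eigenvalues with hd
  set y : Fin n → ℝ := Uᴴ *ᵥ x with hy
  have hyU : y ᵥ* Uᴴ = x := by
    rw [← Matrix.mulVec_transpose, hy, Matrix.mulVec_mulVec]
    have h2 : (Uᴴᵀ : Matrix (Fin n) (Fin n) ℝ) = U := Matrix.transpose_transpose U
    rw [h2, hU, Matrix.one_mulVec]
  have hyy : y ⬝ᵥ y = x ⬝ᵥ x := by
    calc y ⬝ᵥ y = y ⬝ᵥ (Uᴴ *ᵥ x) := by rw [← hy]
      _ = (y ᵥ* Uᴴ) ⬝ᵥ x := Matrix.dotProduct_mulVec y Uᴴ x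
      _ = x ⬝ᵥ x := by rw [hyU]
  have hform : x ⬝ᵥ (M *ᵥ x) = ∑ i, d i * (y i * y i) := by
    conv_lhs => rw [hM.spectral_theorem, Unitary.conjStarAlgAut_apply]
    have hD : Matrix.diagonal ((RCLike.ofReal : ℝ → ℝ) ∘ d) = Matrix.diagonal d := by
      congr 1
    rw [Matrix.star_eq_conjTranspose, hD, ← Matrix.mulVec_mulVec, ← Matrix.mulVec_mulVec, ← hy,
      Matrix.dotProduct_mulVec, ← Matrix.mulVec_transpose]
    have h3 : (Uᵀ : Matrix (Fin n) (Fin n) ℝ) = Uᴴ := rfl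
    rw [h3, ← hy]
    simp [dotProduct, Matrix.mulVec_diagonal]
    exact Finset.sum_congr rfl fun i _ => by ring
  rw [hform, ← hyy]
  have hdot : y ⬝ᵥ y = ∑ i, y i * y i := rfl
  rw [hdot, Finset.mul_sum]
  refine Finset.sum_le_sum fun i _ => ?_
  exact mul_le_mul_of_nonneg_right (ciInf_le (Finite.bddBelow_range d) i) (mul_self_nonneg _)


lemma pinv_dot_bound {m k : ℕ} [NeZero k] (A : Matrix (Fin m) (Fin k) ℝ)
    (hdet : IsUnit ((Aᴴ * A).det)) (x : Fin m → ℝ) :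
    (⨅ i, (Matrix.isHermitian_transpose_mul_self A).eigenvalues i) *
      ((((Aᴴ * A)⁻¹ * Aᴴ) *ᵥ x) ⬝ᵥ (((Aᴴ * A)⁻¹ * Aᴴ) *ᵥ x)) ≤ x ⬝ᵥ x := by
  classical
  set y := ((Aᴴ * A)⁻¹ * Aᴴ) *ᵥ x with hy
  set z := x - A *ᵥ y with hz
  have hBy : (Aᴴ * A) *ᵥ y = Aᴴ *ᵥ x := by
    rw [hy, Matrix.mulVec_mulVec, ← Matrix.mul_assoc, Matrix.mul_nonsing_inv _ hdet,
      Matrix.one_mul]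
  have hAz : Aᴴ *ᵥ z = 0 := by
    rw [hz, Matrix.mulVec_sub, Matrix.mulVec_mulVec, hBy, sub_self]
  have hzA : z ᵥ* A = 0 := by
    rw [← Matrix.mulVec_transpose]
    exact hAz
  have hxx : x = A *ᵥ y + z := by rw [hz]; ring
  have h1 : z ⬝ᵥ (A *ᵥ y) = 0 := by
    rw [Matrix.dotProduct_mulVec, hzA, zero_dotProduct]
  have h2 : (A *ᵥ y) ⬝ᵥ z = 0 := by rw [dotProduct_comm, h1]
  have hxd : x ⬝ᵥ x = (A *ᵥ y) ⬝ᵥ (A *ᵥ y) + z ⬝ᵥ z := by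
    conv_lhs => rw [hxx]
    rw [add_dotProduct, dotProduct_add, dotProduct_add, h1, h2]
    ring
  have hAyq : (A *ᵥ y) ⬝ᵥ (A *ᵥ y) = y ⬝ᵥ ((Aᵀ * A) *ᵥ y) := by
    rw [Matrix.dotProduct_mulVec (A *ᵥ y) A y, ← Matrix.mulVec_transpose,
      Matrix.mulVec_mulVec, dotProduct_comm]
  have hray := rayleigh_le (Matrix.isHermitian_transpose_mul_self A) y
  have hzz := dot_self_nonneg z
  calc (⨅ i, (Matrix.isHermitian_transpose_mul_self A).eigenvalues i) * (y ⬝ᵥ y)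
      ≤ y ⬝ᵥ ((Aᵀ * A) *ᵥ y) := hray
    _ = (A *ᵥ y) ⬝ᵥ (A *ᵥ y) := hAyq.symm
    _ ≤ x ⬝ᵥ x := by rw [hxd]; linarith

lemma upper_bound {m k : ℕ} [NeZero k] (A : Matrix (Fin m) (Fin k) ℝ)
    (hdet : IsUnit ((Aᴴ * A).det))
    (hl : 0 < ⨅ i, (Matrix.isHermitian_transpose_mul_self A).eigenvalues i) :
    ‖clm ((Aᴴ * A)⁻¹ * Aᴴ)‖ ≤
      1 / Real.sqrt (⨅ i, (Matrix.isHermitian_transpose_mul_self A).eigenvalues i) := by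
  classical
  set lam := ⨅ i, (Matrix.isHermitian_transpose_mul_self A).eigenvalues i with hlam
  have hs : 0 < Real.sqrt lam := Real.sqrt_pos.mpr hl
  refine ContinuousLinearMap.opNorm_le_bound _ (by positivity) fun x => ?_
  set xf := WithLp.equiv 2 (Fin m → ℝ) x with hxf
  have hxn : ‖x‖ = Real.sqrt (xf ⬝ᵥ xf) := by
    rw [← norm_eq_sqrt_dot, hxf, Equiv.symm_apply_apply]
  have hb := pinv_dot_bound A hdet xf
  set y := ((Aᴴ * A)⁻¹ * Aᴴ) *ᵥ xf with hy
  have hcl : ‖clm ((Aᴴ * A)⁻¹ * Aᴴ) x‖ = Real.sqrt (y ⬝ᵥ y) := norm_eq_sqrt_dot y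
  rw [hcl, hxn]
  have hyd : y ⬝ᵥ y ≤ (xf ⬝ᵥ xf) / lam := (le_div_iff₀ hl).mpr (by linarith)
  calc Real.sqrt (y ⬝ᵥ y) ≤ Real.sqrt ((xf ⬝ᵥ xf) / lam) := Real.sqrt_le_sqrt hyd
    _ = Real.sqrt (xf ⬝ᵥ xf) / Real.sqrt lam := Real.sqrt_div (dot_self_nonneg xf) lam
    _ = 1 / Real.sqrt lam * Real.sqrt (xf ⬝ᵥ xf) := by ring

lemma lower_bound {m k : ℕ} [NeZero k] (A : Matrix (Fin m) (Fin k) ℝ)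
    (hl : 0 < ⨅ i, (Matrix.isHermitian_transpose_mul_self A).eigenvalues i)
    (G : Matrix (Fin k) (Fin m) ℝ) (hGA : G * A = 1) :
    1 / Real.sqrt (⨅ i, (Matrix.isHermitian_transpose_mul_self A).eigenvalues i) ≤ ‖clm G‖ := by
  classical
  have hB := Matrix.isHermitian_transpose_mul_self A
  set lam := ⨅ i, (Matrix.isHermitian_transpose_mul_self A).eigenvalues i with hlam
  have hs : 0 < Real.sqrt lam := Real.sqrt_pos.mpr hl
  obtain ⟨i₀, hi₀⟩ := exists_eq_ciInf_of_finite
    (f := (Matrix.isHermitian_transpose_mul_self A).eigenvalues)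
  set vf : Fin k → ℝ := ⇑((Matrix.isHermitian_transpose_mul_self A).eigenvectorBasis i₀) with hvf
  have hv1 : ‖(Matrix.isHermitian_transpose_mul_self A).eigenvectorBasis i₀‖ = 1 :=
    (Matrix.isHermitian_transpose_mul_self A).eigenvectorBasis.orthonormal.1 i₀
  have hvv : vf ⬝ᵥ vf = 1 := by
    have := norm_sq_eq_dot ((Matrix.isHermitian_transpose_mul_self A).eigenvectorBasis i₀)
    rw [hv1] at this
    rw [hvf]; simpa using this.symm
  have hAv : (Aᵀ * A) *ᵥ vf =
      ((Matrix.isHermitian_transpose_mul_self A).eigenvalues i₀) • vf :=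
    (Matrix.isHermitian_transpose_mul_self A).mulVec_eigenvectorBasis i₀
  have hAvAv : (A *ᵥ vf) ⬝ᵥ (A *ᵥ vf) = lam := by
    rw [Matrix.dotProduct_mulVec (A *ᵥ vf) A vf, ← Matrix.mulVec_transpose,
      Matrix.mulVec_mulVec, dotProduct_comm, hAv, dotProduct_smul,
      smul_eq_mul, hvv, mul_one, hi₀]
  have hGv : G *ᵥ (A *ᵥ vf) = vf := by
    rw [Matrix.mulVec_mulVec, hGA, Matrix.one_mulVec]
  set w : EuclideanSpace ℝ (Fin m) := (WithLp.equiv 2 (Fin m → ℝ)).symm (A *ᵥ vf) with hw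
  have hwn : ‖w‖ = Real.sqrt lam := by rw [hw, norm_eq_sqrt_dot, hAvAv]
  have hclw : ‖clm G w‖ = 1 := by
    have : clm G w = (WithLp.equiv 2 (Fin k → ℝ)).symm (G *ᵥ (A *ᵥ vf)) := by
      rw [clm_apply, hw, Equiv.apply_symm_apply]
    rw [this, hGv]
    exact hv1
  have hle := (clm G).le_opNorm w
  rw [hclw, hwn] at hle
  rw [div_le_iff₀ hs]
  linarith

end SobolevAux

/-- The Sobolev dual `F_{sob,r} = (D^{−r}E)† D^{−r}` is a left inverse of `E`, minimizes
`‖F D^r‖_{ℓ₂→ℓ₂}` among all left inverses `F` of `E`, and the minimum value is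
`1/σ_min(D^{−r}E)`. -/
theorem sobolev_dual_minimizes (m k r : ℕ) (hk : 0 < k) (hkm : k ≤ m) (hr : 0 < r)
    (E : Matrix (Fin m) (Fin k) ℝ) (hE : E.rank = k) :
    let A := (Dmat m)⁻¹ ^ r * E
    let Fsob := (Aᴴ * A)⁻¹ * Aᴴ * (Dmat m)⁻¹ ^ r
    Fsob * E = 1 ∧
    (∀ F : Matrix (Fin k) (Fin m) ℝ, F * E = 1 →
      opNorm2 (Fsob * (Dmat m) ^ r) ≤ opNorm2 (F * (Dmat m) ^ r)) ∧
    opNorm2 (Fsob * (Dmat m) ^ r) = 1 / sigmaMin A := by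
  intro A Fsob
  classical
  have hm : 0 < m := lt_of_lt_of_le hk hkm
  haveI : NeZero m := ⟨hm.ne'⟩
  haveI : NeZero k := ⟨hk.ne'⟩
  have hDdet : (Dmat m).det = 1 := by
    rw [Matrix.det_of_lowerTriangular (Dmat m) (by
      intro i j hij
      have hij' : (i : ℕ) < (j : ℕ) := hij
      simp only [Dmat, Matrix.of_apply]
      rw [if_neg (by omega), if_neg (by omega)])]
    simp [Dmat]
  have hDu : IsUnit (Dmat m).det := by rw [hDdet]; exact isUnit_one
  haveI hDinv : Invertible (Dmat m) := (Dmat m).invertibleOfIsUnitDet hDu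
  have hinv : (Dmat m)⁻¹ = ⅟(Dmat m) := (Matrix.invOf_eq_nonsing_inv (Dmat m)).symm
  have hDi : (Dmat m)⁻¹ ^ r * (Dmat m) ^ r = 1 := by
    rw [hinv, ← invOf_pow, invOf_mul_self]
  have hDi2 : (Dmat m) ^ r * (Dmat m)⁻¹ ^ r = 1 := by
    rw [hinv, ← invOf_pow, mul_invOf_self]
  have hArank : A.rank = k := by
    have hdet : ((Dmat m)⁻¹ ^ r).det = 1 := by
      rw [Matrix.det_pow, Matrix.det_nonsing_inv, hDdet]
      simp
    have := Matrix.rank_mul_eq_right_of_isUnit_det ((Dmat m)⁻¹ ^ r) E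
      (by rw [hdet]; exact isUnit_one)
    rw [show A = (Dmat m)⁻¹ ^ r * E from rfl, this, hE]
  have hBrank : (Aᴴ * A).rank = k := by rw [Matrix.rank_conjTranspose_mul_self]; exact hArank
  have hev : ∀ i, 0 < (Matrix.isHermitian_transpose_mul_self A).eigenvalues i := by
    intro i
    rcases (Matrix.eigenvalues_conjTranspose_mul_self_nonneg A i).lt_or_eq with h | h
    · exact h
    · exfalso
      have hc := (Matrix.isHermitian_transpose_mul_self A).rank_eq_card_non_zero_eigs
      rw [show (Aᵀ * A).rank = k by
        rw [← Matrix.conjTranspose_eq_transpose_of_trivial]; exact hBrank] at hc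
      have hlt := Fintype.card_subtype_lt
        (p := fun j => (Matrix.isHermitian_transpose_mul_self A).eigenvalues j ≠ 0)
        (x := i) (fun hne => hne h.symm)
      rw [Fintype.card_fin] at hlt
      have hlt' : Fintype.card
          { j // (Matrix.isHermitian_transpose_mul_self A).eigenvalues j ≠ 0 } < k := hlt
      omega
  have hl : 0 < ⨅ i, (Matrix.isHermitian_transpose_mul_self A).eigenvalues i := by
    obtain ⟨i₀, hi₀⟩ := exists_eq_ciInf_of_finite
      (f := (Matrix.isHermitian_transpose_mul_self A).eigenvalues)
    rw [← hi₀]; exact hev i₀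
  have hBdet : IsUnit ((Aᴴ * A).det) := by
    have hpr : (Aᴴ * A).det = ∏ i, (Matrix.isHermitian_transpose_mul_self A).eigenvalues i := by
      simpa using (Matrix.isHermitian_transpose_mul_self A).det_eq_prod_eigenvalues
    rw [hpr]
    exact (Finset.prod_pos (fun i _ => hev i)).ne'.isUnit
  have hFE : Fsob * E = 1 := by
    show (Aᴴ * A)⁻¹ * Aᴴ * (Dmat m)⁻¹ ^ r * E = 1
    rw [Matrix.mul_assoc ((Aᴴ * A)⁻¹ * Aᴴ), show (Dmat m)⁻¹ ^ r * E = A from rfl,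
      Matrix.mul_assoc, Matrix.nonsing_inv_mul _ hBdet]
  have hFD : Fsob * (Dmat m) ^ r = (Aᴴ * A)⁻¹ * Aᴴ := by
    show (Aᴴ * A)⁻¹ * Aᴴ * (Dmat m)⁻¹ ^ r * (Dmat m) ^ r = _
    rw [Matrix.mul_assoc, hDi, Matrix.mul_one]
  have hsig : sigmaMin A =
      Real.sqrt (⨅ i, (Matrix.isHermitian_transpose_mul_self A).eigenvalues i) := rfl
  refine ⟨hFE, ?_, ?_⟩
  · intro F hF
    have hGA : (F * (Dmat m) ^ r) * A = 1 := by
      rw [show A = (Dmat m)⁻¹ ^ r * E from rfl, Matrix.mul_assoc F, ← Matrix.mul_assoc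
        ((Dmat m) ^ r), hDi2, Matrix.one_mul, hF]
    rw [hFD, SobolevAux.opNorm2_eq, SobolevAux.opNorm2_eq]
    exact le_trans (SobolevAux.upper_bound A hBdet hl) (SobolevAux.lower_bound A hl _ hGA)
  · rw [hFD, SobolevAux.opNorm2_eq, hsig]
    refine le_antisymm (SobolevAux.upper_bound A hBdet hl) ?_
    have hGA : ((Aᴴ * A)⁻¹ * Aᴴ) * A = 1 := by
      rw [Matrix.mul_assoc, Matrix.nonsing_inv_mul _ hBdet]
    exact SobolevAux.lower_bound A hl _ hGA
end
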